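/- arXiv:1107.1436 — 8 statements merged into one kernel-verified Lean document; each statement's English description precedes it below -/
import Mathlib

section
/- Let m ≥ 2 and let 𝒫 be an (m+1)-pattern. If there exists an m-stable m-pattern 𝒬 such that 𝒫_γ = 𝒬 for every γ ∈ Π(m+1,m), then 𝒫 is (m+1)-stable. -/
open Finset

/-- `vec m` is the set `{1, …, m}`. -/
def vec (m : ℕ) : Finset ℕ := Finset.Icc 1 m

/-- `IsNOP s k C` : `C 1, …, C k` form a naturally ordered partition of `{1, …, s}`
into `k` nonempty sets. -/
def IsNOP (s k : ℕ) (C : ℕ → Finset ℕ) : Prop :=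
  (∀ i ∈ Finset.Icc 1 k, (C i).Nonempty) ∧
  (∀ i ∈ Finset.Icc 1 k, ∀ j ∈ Finset.Icc 1 k, i ≠ j → Disjoint (C i) (C j)) ∧
  (Finset.Icc 1 k).biUnion C = Finset.Icc 1 s ∧
  (∀ i ∈ Finset.Icc 1 k, ∀ j ∈ Finset.Icc 1 k, i < j → (C i).min < (C j).min)

/-- The induced subset `P_γ`. -/
def indSet (C : ℕ → Finset ℕ) (k : ℕ) (P : Finset ℕ) : Finset ℕ :=
  (Finset.Icc 1 k).filter fun j => ((C j) ∩ P).Nonempty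

/-- The induced pattern `𝒫_γ`. -/
def indPat (C : ℕ → Finset ℕ) (k : ℕ) (P : Set (Finset ℕ)) : Set (Finset ℕ) :=
  indSet C k '' P

/-- An `m`-pattern: a nonempty collection of nonempty subsets of `{1, …, m}`. -/
def IsPattern (m : ℕ) (P : Set (Finset ℕ)) : Prop :=
  P.Nonempty ∧ ∀ Q ∈ P, Finset.Nonempty Q ∧ Q ⊆ vec m

/-- `k`-stability of an `m`-pattern. -/
def IsStable (m k : ℕ) (P : Set (Finset ℕ)) : Prop :=
  ∀ k', 2 ≤ k' → k' ≤ k → ∀ α β : ℕ → Finset ℕ,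
    IsNOP m k' α → IsNOP m k' β → indPat α k' P = indPat β k' P

/-- `φ_m = {{1},{1,2},…,{1,…,m}}`. -/
def phiPat (m : ℕ) : Set (Finset ℕ) :=
  { S | ∃ l, 1 ≤ l ∧ l ≤ m ∧ S = Finset.Icc 1 l }

/-- `A_{j,m}`: nonempty subsets of `{1,…,m}` of cardinality at most `j`. -/
def APat (j m : ℕ) : Set (Finset ℕ) :=
  { S | S.Nonempty ∧ S ⊆ vec m ∧ S.card ≤ j }

/-- `A¹_{j,m}`: subsets of `{1,…,m}` of cardinality at most `j` containing `1`. -/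
def A1Pat (j m : ℕ) : Set (Finset ℕ) :=
  { S | 1 ∈ S ∧ S ⊆ vec m ∧ S.card ≤ j }

/-- `H^m_{h,l}`: complements in `{1,…,m}` of a set of `h` holes, all lying in `[l,m]`. -/
def HPat (m h l : ℕ) : Set (Finset ℕ) :=
  { S | ∃ D : Finset ℕ, D.card = h ∧ D ⊆ Finset.Icc l m ∧ S = vec m \ D }

/-- `EH^m_{h,l}`: complements in `{1,…,m}` of a set of `h` holes, all in `[l,m]`,
whose first hole equals `l`. -/
def EHPat (m h l : ℕ) : Set (Finset ℕ) :=
  { S | ∃ D : Finset ℕ, D.card = h ∧ D ⊆ Finset.Icc l m ∧ l ∈ D ∧ S = vec m \ D }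

/-- `D^m_{r,s} = A¹_{m-r-1,m} ∪ ⋃_{h=1}^{r} H^m_{h,s-h+1} ∪ {m⃗}`. -/
def DPat (m r s : ℕ) : Set (Finset ℕ) :=
  A1Pat (m - r - 1) m ∪ (⋃ h ∈ Finset.Icc 1 r, HPat m h (s - h + 1)) ∪ {vec m}

/-- `γ_{i,j} ∈ Π(m+1,m)` (for `1 ≤ i < j ≤ m+1`): the naturally ordered partition of
`{1,…,m+1}` into `m` blocks, namely `{i,j}` together with the singletons of the
remaining points. -/
def gammaIJ (i j : ℕ) : ℕ → Finset ℕ :=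
  fun t => if t = i then {i, j} else if t < j then {t} else {t + 1}

/-- A hereditary `m`-stable `m`-pattern. -/
def IsHSP (m : ℕ) (P : Set (Finset ℕ)) : Prop :=
  IsPattern m P ∧ IsStable m m P ∧
  ∀ m', m < m' → ∃ Q : Set (Finset ℕ), IsPattern m' Q ∧ IsStable m' m' Q ∧
    ∀ γ : ℕ → Finset ℕ, IsNOP m' m γ → indPat γ m Q = P

/-- Unique stable lifts. -/
def HasUSL (m : ℕ) (P : Set (Finset ℕ)) : Prop :=
  ∀ m', m < m' → ∃! Q : Set (Finset ℕ),
    IsPattern m' Q ∧ IsStable m' m' Q ∧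
    ∀ γ : ℕ → Finset ℕ, IsNOP m' m γ → indPat γ m Q = P

lemma min_lt_min_of (A B : Finset ℕ) (hB : B.Nonempty)
    (h : ∃ a ∈ A, ∀ b ∈ B, a < b) : A.min < B.min := by
  obtain ⟨a, ha, hab⟩ := h
  have h1 : A.min ≤ (a : WithTop ℕ) := Finset.min_le ha
  have h2 : (a : WithTop ℕ) < B.min := by
    rw [← Finset.coe_min' hB]
    exact WithTop.coe_lt_coe.mpr (hab _ (Finset.min'_mem B hB))
  exact lt_of_le_of_lt h1 h2

def cmap (i j : ℕ) : ℕ → ℕ := fun x => if x = j then i else if x < j then x else x - 1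

lemma cmap_inj {i j x y : ℕ} (hij : i < j) (hc : cmap i j x = cmap i j y) :
    x = y ∨ (x = i ∧ y = j) ∨ (x = j ∧ y = i) := by
  unfold cmap at hc; split_ifs at hc <;> omega

lemma cmap_mem {m i j x : ℕ} (hi : 1 ≤ i) (hij : i < j) (hj : j ≤ m + 1)
    (hx : x ∈ Finset.Icc 1 (m+1)) : cmap i j x ∈ Finset.Icc 1 m := by
  simp only [Finset.mem_Icc] at *
  unfold cmap; split_ifs <;> omega

lemma cmap_surj {m i j r : ℕ} (hi : 1 ≤ i) (hij : i < j) (hj : j ≤ m+1)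
    (hr : r ∈ Finset.Icc 1 m) : ∃ x ∈ Finset.Icc 1 (m+1), cmap i j x = r := by
  simp only [Finset.mem_Icc] at *
  by_cases hcase : r < j
  · exact ⟨r, by omega, by unfold cmap; split_ifs <;> omega⟩
  · exact ⟨r+1, by omega, by unfold cmap; split_ifs <;> omega⟩

lemma mem_gamma_iff {m i j x r : ℕ} (hi : 1 ≤ i) (hij : i < j) (hj : j ≤ m+1)
    (hx : x ∈ Finset.Icc 1 (m+1)) (hr : r ∈ Finset.Icc 1 m) :
    x ∈ gammaIJ i j r ↔ cmap i j x = r := by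
  simp only [Finset.mem_Icc] at hx hr
  unfold gammaIJ cmap
  split_ifs <;>
    simp only [Finset.mem_insert, Finset.mem_singleton] <;> omega

lemma indSet_gamma {m i j : ℕ} (hi : 1 ≤ i) (hij : i < j) (hj : j ≤ m+1)
    {S : Finset ℕ} (hS : S ⊆ Finset.Icc 1 (m+1)) :
    indSet (gammaIJ i j) m S = S.image (cmap i j) := by
  ext r
  simp only [indSet, Finset.mem_filter, Finset.mem_image]
  constructor
  · rintro ⟨hr, hne⟩
    obtain ⟨x, hx⟩ := hne
    rw [Finset.mem_inter] at hx
    exact ⟨x, hx.2, (mem_gamma_iff hi hij hj (hS hx.2) hr).1 hx.1⟩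
  · rintro ⟨x, hxS, hcx⟩
    have hr : r ∈ Finset.Icc 1 m := hcx ▸ cmap_mem hi hij hj (hS hxS)
    exact ⟨hr, ⟨x, Finset.mem_inter.mpr ⟨(mem_gamma_iff hi hij hj (hS hxS) hr).2 hcx, hxS⟩⟩⟩

lemma gamma_nop {m i j : ℕ} (hi : 1 ≤ i) (hij : i < j) (hj : j ≤ m + 1) :
    IsNOP (m+1) m (gammaIJ i j) := by
  have hne : ∀ r ∈ Finset.Icc 1 m, (gammaIJ i j r).Nonempty := by
    intro r hr
    refine ⟨if r < j then r else r + 1, ?_⟩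
    have := Finset.mem_Icc.mp hr
    unfold gammaIJ
    split_ifs <;> simp only [Finset.mem_insert, Finset.mem_singleton] <;> omega
  refine ⟨hne, ?_, ?_, ?_⟩
  · intro r hr s hs hrs
    rw [Finset.disjoint_left]
    intro x hxr hxs
    have hxI : x ∈ Finset.Icc 1 (m+1) := by
      simp only [Finset.mem_Icc] at hr ⊢
      unfold gammaIJ at hxr
      split_ifs at hxr <;> simp only [Finset.mem_insert, Finset.mem_singleton] at hxr <;> omega
    have h1 := (mem_gamma_iff hi hij hj hxI hr).1 hxr
    have h2 := (mem_gamma_iff hi hij hj hxI hs).1 hxs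
    exact hrs (h1 ▸ h2 ▸ rfl)
  · ext x
    rw [Finset.mem_biUnion]
    constructor
    · rintro ⟨r, hr, hx⟩
      simp only [Finset.mem_Icc] at hr ⊢
      unfold gammaIJ at hx
      split_ifs at hx <;> simp only [Finset.mem_insert, Finset.mem_singleton] at hx <;> omega
    · intro hx
      refine ⟨cmap i j x, cmap_mem hi hij hj hx, ?_⟩
      exact (mem_gamma_iff hi hij hj hx (cmap_mem hi hij hj hx)).2 rfl
  · intro r hr s hs hrs
    apply min_lt_min_of _ _ (hne s hs)
    refine ⟨if r < j then r else r + 1, ?_, ?_⟩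
    · have := Finset.mem_Icc.mp hr
      unfold gammaIJ
      split_ifs <;> simp only [Finset.mem_insert, Finset.mem_singleton] <;> omega
    · intro b hb
      have hrI := Finset.mem_Icc.mp hr
      have hsI := Finset.mem_Icc.mp hs
      unfold gammaIJ at hb
      split_ifs at hb <;>
        simp only [Finset.mem_insert, Finset.mem_singleton] at hb <;>
        split_ifs <;> omega

lemma factor {m k' : ℕ} (hk1 : 1 ≤ k') (hk : k' ≤ m) {α : ℕ → Finset ℕ}
    (hα : IsNOP (m+1) k' α) :
    ∃ γ δ : ℕ → Finset ℕ, IsNOP (m+1) m γ ∧ IsNOP m k' δ ∧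
      ∀ S ⊆ Finset.Icc 1 (m+1), indSet δ k' (indSet γ m S) = indSet α k' S := by
  obtain ⟨hne, hdisj, hun, hmin⟩ := hα
  have hsub : ∀ r ∈ Finset.Icc 1 k', α r ⊆ Finset.Icc 1 (m+1) := by
    intro r hr x hx
    rw [← hun]; exact Finset.mem_biUnion.mpr ⟨r, hr, hx⟩
  have hsum : ∑ r ∈ Finset.Icc 1 k', (α r).card = m + 1 := by
    rw [← Finset.card_biUnion hdisj, hun, Nat.card_Icc]
    omega
  have hbig : ∃ t ∈ Finset.Icc 1 k', 2 ≤ (α t).card := by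
    by_contra hcon
    push_neg at hcon
    have hle : ∑ r ∈ Finset.Icc 1 k', (α r).card ≤ ∑ r ∈ Finset.Icc 1 k', 1 :=
      Finset.sum_le_sum fun r hr => by have := hcon r hr; omega
    simp only [Finset.sum_const, smul_eq_mul, mul_one, Nat.card_Icc] at hle
    omega
  obtain ⟨t, ht, htcard⟩ := hbig
  set i := (α t).min' (hne t ht) with hidef
  have hiA : i ∈ α t := Finset.min'_mem _ _
  have himin : ∀ x ∈ α t, i ≤ x := fun x hx => Finset.min'_le _ _ hx
  have hstar : (α t \ {i}).Nonempty := by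
    rw [← Finset.card_pos, Finset.card_sdiff_of_subset (Finset.singleton_subset_iff.mpr hiA)]
    simp only [Finset.card_singleton]
    omega
  set j := (α t \ {i}).min' hstar with hjdef
  have hjA : j ∈ α t ∧ j ≠ i := by
    have := Finset.min'_mem _ hstar
    rw [Finset.mem_sdiff, Finset.mem_singleton] at this
    exact this
  have hij : i < j := lt_of_le_of_ne (himin j hjA.1) (Ne.symm hjA.2)
  have hi1 : 1 ≤ i := (Finset.mem_Icc.mp (hsub t ht hiA)).1
  have hjm : j ≤ m + 1 := (Finset.mem_Icc.mp (hsub t ht hjA.1)).2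
  -- key monotone fact
  have key : ∀ r (hr : r ∈ Finset.Icc 1 k'), ∀ s ∈ Finset.Icc 1 k', r < s →
      ∀ y ∈ α s, cmap i j ((α r).min' (hne r hr)) < cmap i j y := by
    intro r hr s hs hrs y hy
    set a := (α r).min' (hne r hr) with hadef
    have haA : a ∈ α r := Finset.min'_mem _ _
    have hay : a < (α s).min' (hne s hs) := by
      have h1 := hmin r hr s hs hrs
      rw [← Finset.coe_min' (hne r hr), ← Finset.coe_min' (hne s hs)] at h1
      exact_mod_cast h1
    have hay2 : a < y := lt_of_lt_of_le hay (Finset.min'_le _ _ hy)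
    have haj : a ≠ j := by
      intro he
      have hrt : r = t := by
        by_contra h'
        exact Finset.disjoint_left.mp (hdisj r hr t ht h') (he ▸ haA) hjA.1
      have hai : a ≤ i := Finset.min'_le _ _ (hrt.symm ▸ hiA)
      have hia : i ≤ a := himin a (hrt ▸ haA)
      omega
    by_cases hyj : y = j
    · have hst : s = t := by
        by_contra h'
        exact Finset.disjoint_left.mp (hdisj s hs t ht h') (hyj ▸ hy) hjA.1
      have hai : a < i := by
        rw [hidef]
        have : (α s).min' (hne s hs) = (α t).min' (hne t ht) := by
          congr 1 <;> rw [hst]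
        rw [← this]
        exact hay
      subst hyj
      unfold cmap
      split_ifs <;> omega
    · unfold cmap
      split_ifs <;> omega
  refine ⟨gammaIJ i j, fun r => (α r).image (cmap i j), gamma_nop hi1 hij hjm,
    ⟨?_, ?_, ?_, ?_⟩, ?_⟩
  · intro r hr
    exact (hne r hr).image _
  · intro r hr s hs hrs
    rw [Finset.disjoint_left]
    intro v hvr hvs
    obtain ⟨x, hx, hcx⟩ := Finset.mem_image.mp hvr
    obtain ⟨y, hy, hcy⟩ := Finset.mem_image.mp hvs
    have hc : cmap i j x = cmap i j y := by rw [hcx, hcy]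
    rcases cmap_inj hij hc with he | ⟨hxi, hyj⟩ | ⟨hxj, hyi⟩
    · subst he
      exact Finset.disjoint_left.mp (hdisj r hr s hs hrs) hx hy
    · have hrt : r = t := by
        by_contra h'
        exact Finset.disjoint_left.mp (hdisj r hr t ht h') (hxi ▸ hx) hiA
      have hst : s = t := by
        by_contra h'
        exact Finset.disjoint_left.mp (hdisj s hs t ht h') (hyj ▸ hy) hjA.1
      exact hrs (hrt.trans hst.symm)
    · have hrt : r = t := by
        by_contra h'
        exact Finset.disjoint_left.mp (hdisj r hr t ht h') (hxj ▸ hx) hjA.1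
      have hst : s = t := by
        by_contra h'
        exact Finset.disjoint_left.mp (hdisj s hs t ht h') (hyi ▸ hy) hiA
      exact hrs (hrt.trans hst.symm)
  · ext v
    rw [Finset.mem_biUnion]
    constructor
    · rintro ⟨r, hr, hv⟩
      obtain ⟨x, hx, hcx⟩ := Finset.mem_image.mp hv
      exact hcx ▸ cmap_mem hi1 hij hjm (hsub r hr hx)
    · intro hv
      obtain ⟨x, hxI, hcx⟩ := cmap_surj hi1 hij hjm hv
      rw [← hun] at hxI
      obtain ⟨r, hr, hx⟩ := Finset.mem_biUnion.mp hxI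
      exact ⟨r, hr, Finset.mem_image.mpr ⟨x, hx, hcx⟩⟩
  · intro r hr s hs hrs
    apply min_lt_min_of _ _ ((hne s hs).image _)
    refine ⟨cmap i j ((α r).min' (hne r hr)),
      Finset.mem_image_of_mem _ (Finset.min'_mem _ _), ?_⟩
    intro b hb
    obtain ⟨y, hy, hcy⟩ := Finset.mem_image.mp hb
    exact hcy ▸ key r hr s hs hrs y hy
  · intro S hS
    rw [indSet_gamma hi1 hij hjm hS]
    ext r
    simp only [indSet, Finset.mem_filter]
    refine and_congr_right fun hr => ?_
    constructor
    · rintro ⟨v, hv⟩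
      rw [Finset.mem_inter] at hv
      obtain ⟨x, hxαr, hcx⟩ := Finset.mem_image.mp hv.1
      obtain ⟨y, hyS, hcy⟩ := Finset.mem_image.mp hv.2
      have hc : cmap i j x = cmap i j y := by rw [hcx, hcy]
      rcases cmap_inj hij hc with he | ⟨hxi, hyj⟩ | ⟨hxj, hyi⟩
      · exact ⟨x, Finset.mem_inter.mpr ⟨hxαr, by rw [he]; exact hyS⟩⟩
      · have hrt : r = t := by
          by_contra h'
          exact Finset.disjoint_left.mp (hdisj r hr t ht h') (hxi ▸ hxαr) hiA
        exact ⟨j, Finset.mem_inter.mpr ⟨by rw [hrt]; exact hjA.1, hyj ▸ hyS⟩⟩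
      · have hrt : r = t := by
          by_contra h'
          exact Finset.disjoint_left.mp (hdisj r hr t ht h') (hxj ▸ hxαr) hjA.1
        exact ⟨i, Finset.mem_inter.mpr ⟨by rw [hrt]; exact hiA, hyi ▸ hyS⟩⟩
    · rintro ⟨x, hx⟩
      rw [Finset.mem_inter] at hx
      exact ⟨cmap i j x, Finset.mem_inter.mpr
        ⟨Finset.mem_image_of_mem _ hx.1, Finset.mem_image_of_mem _ hx.2⟩⟩

lemma nop_self {s : ℕ} {C : ℕ → Finset ℕ} (h : IsNOP s s C) :
    ∀ t ∈ Finset.Icc 1 s, C t = {t} := by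
  obtain ⟨hne, hdisj, hun, hmin⟩ := h
  have hsubC : ∀ r ∈ Finset.Icc 1 s, C r ⊆ Finset.Icc 1 s := by
    intro r hr x hx
    rw [← hun]; exact Finset.mem_biUnion.mpr ⟨r, hr, hx⟩
  have hsum : ∑ r ∈ Finset.Icc 1 s, (C r).card = s := by
    rw [← Finset.card_biUnion hdisj, hun, Nat.card_Icc]
    omega
  have hcard : ∀ r ∈ Finset.Icc 1 s, (C r).card = 1 := by
    intro r hr
    by_contra hc
    have h2 : 2 ≤ (C r).card := by
      have := Finset.card_pos.mpr (hne r hr); omega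
    have hlt : ∑ u ∈ Finset.Icc 1 s, 1 < ∑ u ∈ Finset.Icc 1 s, (C u).card :=
      Finset.sum_lt_sum (fun u hu => Finset.card_pos.mpr (hne u hu)) ⟨r, hr, by omega⟩
    simp only [Finset.sum_const, smul_eq_mul, mul_one, Nat.card_Icc] at hlt
    omega
  have hsingle : ∀ r (hr : r ∈ Finset.Icc 1 s), C r = {(C r).min' (hne r hr)} := by
    intro r hr
    apply Finset.eq_singleton_iff_unique_mem.mpr
    exact ⟨Finset.min'_mem _ _, fun x hx =>
      Finset.card_le_one.mp (hcard r hr).le x hx _ (Finset.min'_mem _ _)⟩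
  have hmemeq : ∀ x r (hr : r ∈ Finset.Icc 1 s), x ∈ C r → (C r).min' (hne r hr) = x := by
    intro x r hr hx
    rw [hsingle r hr, Finset.mem_singleton] at hx
    exact hx.symm
  have hmono : ∀ u (hu : u ∈ Finset.Icc 1 s) v (hv : v ∈ Finset.Icc 1 s), u < v →
      (C u).min' (hne u hu) < (C v).min' (hne v hv) := by
    intro u hu v hv huv
    have h1 := hmin u hu v hv huv
    rw [← Finset.coe_min' (hne u hu), ← Finset.coe_min' (hne v hv)] at h1
    exact_mod_cast h1
  have hminIcc : ∀ r (hr : r ∈ Finset.Icc 1 s), (C r).min' (hne r hr) ∈ Finset.Icc 1 s :=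
    fun r hr => hsubC r hr (Finset.min'_mem _ _)
  have key : ∀ t, 1 ≤ t → ∀ (hts : t ≤ s) (hn : (C t).Nonempty), (C t).min' hn = t := by
    intro t ht1
    induction t, ht1 using Nat.le_induction with
    | base =>
      intro hts hn
      have h1s : (1 : ℕ) ∈ Finset.Icc 1 s := Finset.mem_Icc.mpr ⟨le_refl _, hts⟩
      obtain ⟨u, hu, h1u⟩ := Finset.mem_biUnion.mp (hun ▸ h1s)
      have hu1 : (C u).min' (hne u hu) = 1 := hmemeq 1 u hu h1u
      have hueq : u = 1 := by
        by_contra h'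
        have hu2 : 1 < u := lt_of_le_of_ne (Finset.mem_Icc.mp hu).1 (Ne.symm h')
        have := hmono 1 h1s u hu hu2
        rw [hu1] at this
        have := (Finset.mem_Icc.mp (hminIcc 1 h1s)).1
        omega
      subst hueq
      exact hu1
    | succ n hn1 ih =>
      intro hts hn
      have hns : n ≤ s := by omega
      have hnI : n ∈ Finset.Icc 1 s := Finset.mem_Icc.mpr ⟨hn1, hns⟩
      have hn1I : n + 1 ∈ Finset.Icc 1 s := Finset.mem_Icc.mpr ⟨by omega, hts⟩
      obtain ⟨u, hu, h1u⟩ := Finset.mem_biUnion.mp (hun ▸ hn1I)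
      have hueq1 : (C u).min' (hne u hu) = n + 1 := hmemeq (n+1) u hu h1u
      have hueq : u = n + 1 := by
        rcases lt_trichotomy u (n+1) with hlt | heq | hgt
        · have hu1 : 1 ≤ u := (Finset.mem_Icc.mp hu).1
          rcases lt_or_eq_of_le (Nat.lt_succ_iff.mp hlt) with hlt' | heq'
          · have := hmono u hu n hnI hlt'
            rw [hueq1, ih hns (hne n hnI)] at this
            omega
          · subst heq'
            rw [ih hns (hne u hu)] at hueq1
            omega
        · exact heq
        · have := hmono (n+1) hn1I u hu hgt
          rw [hueq1] at this
          have h2 := hmono n hnI (n+1) hn1I (by omega)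
          rw [ih hns (hne n hnI)] at h2
          omega
      subst hueq
      exact hueq1
  intro t ht
  rw [hsingle t ht, key t (Finset.mem_Icc.mp ht).1 (Finset.mem_Icc.mp ht).2 (hne t ht)]

theorem stmt0 (m : ℕ) (hm : 2 ≤ m) (P : Set (Finset ℕ)) (hP : IsPattern (m + 1) P)
    (h : ∃ Q : Set (Finset ℕ), IsPattern m Q ∧ IsStable m m Q ∧
      ∀ γ : ℕ → Finset ℕ, IsNOP (m + 1) m γ → indPat γ m P = Q) :
    IsStable (m + 1) (m + 1) P := by
  obtain ⟨Q, hQpat, hQstab, hQind⟩ := h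
  intro k' hk2 hk'le α β hα hβ
  rcases eq_or_lt_of_le hk'le with heq | hlt
  · subst heq
    have hα' := nop_self hα
    have hβ' := nop_self hβ
    unfold indPat
    apply Set.image_congr
    intro S _
    unfold indSet
    apply Finset.filter_congr
    intro x hx
    rw [hα' x hx, hβ' x hx]
  · have hk'm : k' ≤ m := by omega
    obtain ⟨γa, δa, hγa, hδa, hca⟩ := factor (by omega : 1 ≤ k') hk'm hα
    obtain ⟨γb, δb, hγb, hδb, hcb⟩ := factor (by omega : 1 ≤ k') hk'm hβ
    have e1 : indPat α k' P = indPat δa k' Q := by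
      rw [← hQind γa hγa]
      unfold indPat
      rw [Set.image_image]
      exact Set.image_congr fun S hS => (hca S (hP.2 S hS).2).symm
    have e2 : indPat β k' P = indPat δb k' Q := by
      rw [← hQind γb hγb]
      unfold indPat
      rw [Set.image_image]
      exact Set.image_congr fun S hS => (hcb S (hP.2 S hS).2).symm
    rw [e1, e2]
    exact hQstab k' hk2 hk'm δa δb hδa hδb
end

section
/- Let 𝒫 be an (m+1)-stable (m+1)-pattern, let π = γ_{m,m+1} ∈ Π(m+1,m), and let j be an integer with 1 ≤ j < m. If A_{j,m} ⊆ 𝒫_π then A_{j,m+1} ⊆ 𝒫; likewise, if A¹_{j,m} ⊆ 𝒫_π then A¹_{j,m+1} ⊆ 𝒫. -/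
open Finset

lemma mem_gammaIJ {i j t x : ℕ} :
    x ∈ gammaIJ i j t ↔ (if t = i then x = i ∨ x = j else if t < j then x = t else x = t + 1) := by
  unfold gammaIJ
  split_ifs <;> simp

lemma min_gammaIJ {i j : ℕ} (hij : i < j) (t : ℕ) :
    (gammaIJ i j t).min = ((if t < j then t else t + 1 : ℕ) : WithTop ℕ) := by
  unfold gammaIJ
  split_ifs with h h' h'
  · subst h
    rw [Finset.min_insert, Finset.min_singleton, ← WithTop.coe_min]
    exact congrArg _ (Nat.min_eq_left hij.le)
  · exact absurd hij (h ▸ h')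
  · exact Finset.min_singleton
  · exact Finset.min_singleton

lemma gammaIJ_isNOP {i j m : ℕ} (h1 : 1 ≤ i) (hij : i < j) (hjm : j ≤ m + 1) (hm : 1 ≤ m) :
    IsNOP (m + 1) m (gammaIJ i j) := by
  refine ⟨?_, ?_, ?_, ?_⟩
  · intro t ht
    refine ⟨if t < j then t else t + 1, ?_⟩
    rw [mem_gammaIJ]
    split_ifs <;> omega
  · intro s hs t ht hst
    rw [Finset.disjoint_left]
    intro x hx hx'
    rw [mem_gammaIJ] at hx hx'
    simp only [Finset.mem_Icc] at hs ht
    split_ifs at hx hx' <;> omega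
  · ext x
    simp only [Finset.mem_biUnion, Finset.mem_Icc, mem_gammaIJ]
    constructor
    · rintro ⟨t, ⟨ht1, ht2⟩, hx⟩
      split_ifs at hx <;> omega
    · intro hx
      by_cases h1' : x = i ∨ x = j
      · exact ⟨i, ⟨h1, by omega⟩, by simp only [if_pos rfl]; exact h1'⟩
      · push_neg at h1'
        by_cases h2 : x < j
        · exact ⟨x, ⟨by omega, by omega⟩, by split_ifs <;> omega⟩
        · exact ⟨x - 1, ⟨by omega, by omega⟩, by split_ifs <;> omega⟩
  · intro s hs t ht hlt
    rw [min_gammaIJ hij, min_gammaIJ hij]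
    have : (if s < j then s else s + 1) < (if t < j then t else t + 1) := by
      split_ifs <;> omega
    exact_mod_cast this

lemma mem_indSet {C : ℕ → Finset ℕ} {k t : ℕ} {S : Finset ℕ} :
    t ∈ indSet C k S ↔ (1 ≤ t ∧ t ≤ k) ∧ ∃ x ∈ C t, x ∈ S := by
  simp [indSet, Finset.mem_filter, Finset.mem_Icc, Finset.Nonempty, Finset.mem_inter]

lemma indSet_gamma_eq_image {m p q : ℕ} {S : Finset ℕ} (hpq : p < q) (hp : 1 ≤ p)
    (hq : q ≤ m + 1) (hS : S ⊆ vec (m + 1)) (hpS : p ∉ S) (hqS : q ∉ S) :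
    indSet (gammaIJ p q) m S = S.image (fun x => if x < q then x else x - 1) := by
  ext t
  simp only [mem_indSet, Finset.mem_image]
  constructor
  · rintro ⟨⟨ht1, ht2⟩, x, hxC, hxS⟩
    rw [mem_gammaIJ] at hxC
    have hxp : x ≠ p := fun h => hpS (h ▸ hxS)
    have hxq : x ≠ q := fun h => hqS (h ▸ hxS)
    refine ⟨x, hxS, ?_⟩
    split_ifs at hxC ⊢ <;> omega
  · rintro ⟨x, hxS, rfl⟩
    have hx : 1 ≤ x ∧ x ≤ m + 1 := by
      have := hS hxS; simpa [vec, Finset.mem_Icc] using this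
    have hxp : x ≠ p := fun h => hpS (h ▸ hxS)
    have hxq : x ≠ q := fun h => hqS (h ▸ hxS)
    refine ⟨⟨by split_ifs <;> omega, by split_ifs <;> omega⟩, x, ?_, hxS⟩
    rw [mem_gammaIJ]
    split_ifs <;> omega

lemma key_lift {m : ℕ} (hm : 2 ≤ m) {P : Set (Finset ℕ)} (hP : IsPattern (m + 1) P)
    (hst : IsStable (m + 1) (m + 1) P) {S : Finset ℕ} (hS : S ⊆ vec (m + 1))
    {p q : ℕ} (hpq : p < q) (hp : 1 ≤ p) (hq : q ≤ m + 1) (hpS : p ∉ S) (hqS : q ∉ S)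
    (hmem : indSet (gammaIJ p q) m S ∈ indPat (gammaIJ m (m + 1)) m P) : S ∈ P := by
  have hnop1 : IsNOP (m + 1) m (gammaIJ p q) := gammaIJ_isNOP hp hpq hq (by omega)
  have hnop2 : IsNOP (m + 1) m (gammaIJ m (m + 1)) :=
    gammaIJ_isNOP (by omega) (by omega) le_rfl (by omega)
  rw [hst m hm (by omega) _ _ hnop2 hnop1] at hmem
  obtain ⟨T, hTP, hT⟩ := hmem
  have hTsub : T ⊆ vec (m + 1) := (hP.2 T hTP).2
  have hiff : ∀ t, t ∈ indSet (gammaIJ p q) m T ↔ t ∈ indSet (gammaIJ p q) m S :=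
    fun t => by rw [hT]
  have hTeq : T = S := by
    ext x
    by_cases hx1 : x ∈ vec (m + 1)
    · have hx : 1 ≤ x ∧ x ≤ m + 1 := by simpa [vec, Finset.mem_Icc] using hx1
      by_cases hxpq : x = p ∨ x = q
      · have hpS' : p ∉ indSet (gammaIJ p q) m S := by
          rw [mem_indSet]
          rintro ⟨-, y, hy, hyS⟩
          rw [mem_gammaIJ, if_pos rfl] at hy
          rcases hy with h | h <;> [exact hpS (h ▸ hyS); exact hqS (h ▸ hyS)]
        have hpT : p ∉ indSet (gammaIJ p q) m T := fun h => hpS' ((hiff p).1 h)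
        refine iff_of_false (fun hxT => hpT ?_) (fun hxS => ?_)
        · rw [mem_indSet]
          refine ⟨⟨hp, by omega⟩, x, ?_, hxT⟩
          rw [mem_gammaIJ, if_pos rfl]; exact hxpq
        · rcases hxpq with h | h <;> [exact hpS (h ▸ hxS); exact hqS (h ▸ hxS)]
      · push_neg at hxpq
        have hgt : ∀ y, y ∈ gammaIJ p q (if x < q then x else x - 1) ↔ y = x := by
          intro y
          rw [mem_gammaIJ]
          split_ifs <;> omega
        have hchar : ∀ U : Finset ℕ,
            ((if x < q then x else x - 1) ∈ indSet (gammaIJ p q) m U ↔ x ∈ U) := by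
          intro U
          rw [mem_indSet]
          constructor
          · rintro ⟨-, y, hy, hyU⟩
            exact (hgt y).1 hy ▸ hyU
          · intro hxU
            exact ⟨⟨by split_ifs <;> omega, by split_ifs <;> omega⟩, x, (hgt x).2 rfl, hxU⟩
        exact (hchar T).symm.trans ((hiff _).trans (hchar S))
    · exact iff_of_false (fun h => hx1 (hTsub h)) (fun h => hx1 (hS h))
  exact hTeq ▸ hTP

lemma key_solve_aux {m j : ℕ} (hj1 : 1 ≤ j) (hjm : j < m) {P : Set (Finset ℕ)}
    (hP : IsPattern (m + 1) P) (hst : IsStable (m + 1) (m + 1) P) {S : Finset ℕ}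
    (hne : S.Nonempty) (hsub : S ⊆ vec (m + 1)) (hcard : S.card ≤ j)
    (hA : ∀ T : Finset ℕ, T.Nonempty → T ⊆ vec m → T.card ≤ j → (1 ∈ S → 1 ∈ T) →
      T ∈ indPat (gammaIJ m (m + 1)) m P)
    {p q : ℕ} (ha : p ∈ vec (m + 1) \ S) (hb : q ∈ vec (m + 1) \ S) (hlt : p < q) :
    S ∈ P := by
  have hm : 2 ≤ m := by omega
  rw [Finset.mem_sdiff, vec, Finset.mem_Icc] at ha hb
  obtain ⟨⟨hp1, hp2⟩, hpS⟩ := ha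
  obtain ⟨⟨hq1, hq2⟩, hqS⟩ := hb
  apply key_lift hm hP hst hsub hlt hp1 hq2 hpS hqS
  rw [indSet_gamma_eq_image hlt hp1 hq2 hsub hpS hqS]
  apply hA
  · exact hne.image _
  · intro y hy
    rw [Finset.mem_image] at hy
    obtain ⟨x, hxS, rfl⟩ := hy
    have hx : 1 ≤ x ∧ x ≤ m + 1 := by simpa [vec, Finset.mem_Icc] using hsub hxS
    have hxq : x ≠ q := fun h => hqS (h ▸ hxS)
    rw [vec, Finset.mem_Icc]
    constructor <;> split_ifs <;> omega
  · exact le_trans (Finset.card_image_le) hcard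
  · intro h1S
    rw [Finset.mem_image]
    have hq2' : 2 ≤ q := by
      have : q ≠ 1 := fun h => hqS (h ▸ h1S)
      omega
    exact ⟨1, h1S, by rw [if_pos (by omega)]⟩

lemma key_solve {m j : ℕ} (hj1 : 1 ≤ j) (hjm : j < m) {P : Set (Finset ℕ)}
    (hP : IsPattern (m + 1) P) (hst : IsStable (m + 1) (m + 1) P) {S : Finset ℕ}
    (hne : S.Nonempty) (hsub : S ⊆ vec (m + 1)) (hcard : S.card ≤ j)
    (hA : ∀ T : Finset ℕ, T.Nonempty → T ⊆ vec m → T.card ≤ j → (1 ∈ S → 1 ∈ T) →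
      T ∈ indPat (gammaIJ m (m + 1)) m P) : S ∈ P := by
  have hm : 2 ≤ m := by omega
  -- find two elements outside S
  have hDcard : 1 < (vec (m + 1) \ S).card := by
    rw [Finset.card_sdiff_of_subset hsub]
    have : (vec (m + 1)).card = m + 1 := by simp [vec]
    omega
  obtain ⟨a, ha, b, hb, hab⟩ := Finset.one_lt_card.1 hDcard
  rcases hab.lt_or_gt with hlt | hlt
  case _ =>
    exact key_solve_aux hj1 hjm hP hst hne hsub hcard hA ha hb hlt
  case _ =>
    exact key_solve_aux hj1 hjm hP hst hne hsub hcard hA hb ha hlt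

theorem stmt2 (m j : ℕ) (hj1 : 1 ≤ j) (hjm : j < m)
    (P : Set (Finset ℕ)) (hP : IsPattern (m + 1) P) (hst : IsStable (m + 1) (m + 1) P) :
    (APat j m ⊆ indPat (gammaIJ m (m + 1)) m P → APat j (m + 1) ⊆ P) ∧
    (A1Pat j m ⊆ indPat (gammaIJ m (m + 1)) m P → A1Pat j (m + 1) ⊆ P) := by
  constructor
  · intro hA S hS'
    obtain ⟨hne, hsub, hcard⟩ := hS'
    exact key_solve hj1 hjm hP hst hne hsub hcard (fun T h1 h2 h3 _ => hA ⟨h1, h2, h3⟩)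
  · intro hA S hS'
    obtain ⟨h1S, hsub, hcard⟩ := hS'
    exact key_solve hj1 hjm hP hst ⟨1, h1S⟩ hsub hcard
      (fun T h1 h2 h3 h4 => hA ⟨h4 h1S, h2, h3⟩)
end

section
/- Let 𝒫 be an (m+1)-stable (m+1)-pattern and let π = γ_{m,m+1} ∈ Π(m+1,m). If 𝒫_π ∩ H^m_{1,1} = H^m_{1,e} for some integer e with 3 ≤ e ≤ m, then 𝒫 ∩ H^{m+1}_{1,1} = H^{m+1}_{1,e+1}. If in addition m⃗ ∈ 𝒫_π, then {1,…,m+1} ∈ 𝒫. -/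
open Finset

lemma mem_gam (a b t x : ℕ) (hab : a < b) :
    x ∈ gammaIJ a b t ↔
      (t = a ∧ (x = a ∨ x = b)) ∨ (t ≠ a ∧ t < b ∧ x = t) ∨ (t ≠ a ∧ b ≤ t ∧ x = t + 1) := by
  unfold gammaIJ
  split_ifs with h1 h2 <;> simp [Finset.mem_insert, Finset.mem_singleton] <;> omega

lemma mem_indSet_gam (m a b : ℕ) (hab : a < b) (Q : Finset ℕ) (t : ℕ) :
    t ∈ indSet (gammaIJ a b) m Q ↔ 1 ≤ t ∧ t ≤ m ∧
      ((t = a ∧ (a ∈ Q ∨ b ∈ Q)) ∨ (t ≠ a ∧ t < b ∧ t ∈ Q) ∨ (t ≠ a ∧ b ≤ t ∧ t + 1 ∈ Q)) := by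
  unfold indSet
  simp only [Finset.mem_filter, Finset.mem_Icc]
  constructor
  · rintro ⟨⟨h1, h2⟩, x, hx⟩
    rw [Finset.mem_inter] at hx
    obtain ⟨hx1, hx2⟩ := hx
    rw [mem_gam _ _ _ _ hab] at hx1
    refine ⟨h1, h2, ?_⟩
    rcases hx1 with ⟨ht, hx⟩ | ⟨ht, htb, rfl⟩ | ⟨ht, htb, rfl⟩
    · rcases hx with rfl | rfl
      · exact Or.inl ⟨ht, Or.inl hx2⟩
      · exact Or.inl ⟨ht, Or.inr hx2⟩
    · exact Or.inr (Or.inl ⟨ht, htb, hx2⟩)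
    · exact Or.inr (Or.inr ⟨ht, htb, hx2⟩)
  · rintro ⟨h1, h2, hd⟩
    refine ⟨⟨h1, h2⟩, ?_⟩
    rcases hd with ⟨rfl, ha | hb⟩ | ⟨ht, htb, hQ⟩ | ⟨ht, htb, hQ⟩
    · exact ⟨t, Finset.mem_inter.mpr ⟨(mem_gam _ _ _ _ hab).mpr (Or.inl ⟨rfl, Or.inl rfl⟩), ha⟩⟩
    · exact ⟨b, Finset.mem_inter.mpr ⟨(mem_gam _ _ _ _ hab).mpr (Or.inl ⟨rfl, Or.inr rfl⟩), hb⟩⟩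
    · exact ⟨t, Finset.mem_inter.mpr ⟨(mem_gam _ _ _ _ hab).mpr (Or.inr (Or.inl ⟨ht, htb, rfl⟩)), hQ⟩⟩
    · exact ⟨t + 1, Finset.mem_inter.mpr ⟨(mem_gam _ _ _ _ hab).mpr (Or.inr (Or.inr ⟨ht, htb, rfl⟩)), hQ⟩⟩

lemma gam_min (a b t : ℕ) (hab : a < b) (ht : 1 ≤ t) :
    (gammaIJ a b t).min = if t < b then (t : WithBot ℕ) else ((t + 1 : ℕ) : WithBot ℕ) := by
  unfold gammaIJ
  split_ifs with h1 h2 h3 <;> try rfl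
  · subst h1
    rw [Finset.min_insert, Finset.min_singleton, min_eq_left (by exact_mod_cast hab.le)]
    rfl
  · omega

lemma nop_gam (m a b : ℕ) (ha : 1 ≤ a) (hab : a < b) (hb : b ≤ m + 1) :
    IsNOP (m + 1) m (gammaIJ a b) := by
  refine ⟨?_, ?_, ?_, ?_⟩
  · intro i _
    unfold gammaIJ
    split_ifs <;> simp
  · intro i hi j hj hij
    rw [Finset.disjoint_left]
    intro x hxi hxj
    rw [mem_gam _ _ _ _ hab] at hxi hxj
    simp only [Finset.mem_Icc] at hi hj
    omega
  · ext x
    simp only [Finset.mem_biUnion, Finset.mem_Icc]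
    constructor
    · rintro ⟨t, ht, hx⟩
      rw [mem_gam _ _ _ _ hab] at hx
      omega
    · intro hx
      by_cases hxb : x = b
      · exact ⟨a, by omega, (mem_gam _ _ _ _ hab).mpr (Or.inl ⟨rfl, Or.inr hxb⟩)⟩
      · by_cases hxlt : x < b
        · by_cases hxa : x = a
          · exact ⟨a, by omega, (mem_gam _ _ _ _ hab).mpr (Or.inl ⟨rfl, Or.inl hxa⟩)⟩
          · exact ⟨x, by omega, (mem_gam _ _ _ _ hab).mpr (Or.inr (Or.inl ⟨hxa, hxlt, rfl⟩))⟩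
        · exact ⟨x - 1, by omega, (mem_gam _ _ _ _ hab).mpr (Or.inr (Or.inr ⟨by omega, by omega, by omega⟩))⟩
  · intro i hi j hj hij
    simp only [Finset.mem_Icc] at hi hj
    rw [gam_min _ _ _ hab hi.1, gam_min _ _ _ hab hj.1]
    split_ifs <;> refine (WithTop.coe_lt_coe (α := ℕ)).mpr ?_ <;> simp only [Nat.cast_id] <;> omega

lemma Hmem (m l d : ℕ) (hl : 1 ≤ l) (hd1 : 1 ≤ d) (hdm : d ≤ m) :
    vec m \ {d} ∈ HPat m 1 l ↔ l ≤ d := by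
  constructor
  · rintro ⟨D, hc, hsubD, hEq⟩
    obtain ⟨d', rfl⟩ := Finset.card_eq_one.mp hc
    have hd' : d' ∈ Finset.Icc l m := hsubD (Finset.mem_singleton_self _)
    have h2 := Finset.ext_iff.mp hEq d'
    rw [Finset.mem_Icc] at hd'
    simp [vec] at h2
    omega
  · intro hl
    exact ⟨{d}, Finset.card_singleton _, by
      simp only [Finset.singleton_subset_iff, Finset.mem_Icc]; omega, rfl⟩

lemma mem_HPat_one (m l : ℕ) (S : Finset ℕ) :
    S ∈ HPat m 1 l ↔ ∃ d, l ≤ d ∧ d ≤ m ∧ S = vec m \ {d} := by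
  constructor
  · rintro ⟨D, hc, hsubD, rfl⟩
    obtain ⟨d, rfl⟩ := Finset.card_eq_one.mp hc
    have hd : d ∈ Finset.Icc l m := hsubD (Finset.mem_singleton_self _)
    rw [Finset.mem_Icc] at hd
    exact ⟨d, hd.1, hd.2, rfl⟩
  · rintro ⟨d, h1, h2, rfl⟩
    exact ⟨{d}, Finset.card_singleton _, by
      simp only [Finset.singleton_subset_iff, Finset.mem_Icc]; omega, rfl⟩

lemma calc_pi (m p : ℕ) (hp : 1 ≤ p) (hpm : p < m) :
    indSet (gammaIJ m (m + 1)) m (vec (m + 1) \ {p}) = vec m \ {p} := by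
  ext t
  rw [mem_indSet_gam _ _ _ (by omega)]
  simp only [vec, Finset.mem_sdiff, Finset.mem_Icc, Finset.mem_singleton]
  omega

lemma calc_12 (m p : ℕ) (hp : 3 ≤ p) (hpm : p ≤ m + 1) :
    indSet (gammaIJ 1 2) m (vec (m + 1) \ {p}) = vec m \ {p - 1} := by
  ext t
  rw [mem_indSet_gam _ _ _ (by omega)]
  simp only [vec, Finset.mem_sdiff, Finset.mem_Icc, Finset.mem_singleton]
  omega

lemma calc_1p (m p : ℕ) (hp : 2 ≤ p) (hpm : p ≤ m + 1) :
    indSet (gammaIJ 1 p) m (vec (m + 1) \ {1, p}) = vec m \ {1} := by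
  ext t
  rw [mem_indSet_gam _ _ _ (by omega)]
  simp [vec]
  omega

lemma calc_2p (m p : ℕ) (hp : 3 ≤ p) (hpm : p ≤ m + 1) :
    indSet (gammaIJ 2 p) m (vec (m + 1) \ {2, p}) = vec m \ {2} := by
  ext t
  rw [mem_indSet_gam _ _ _ (by omega)]
  simp [vec]
  omega

lemma class_12 (m d : ℕ) (hd3 : 3 ≤ d) (hdm : d ≤ m) (Q : Finset ℕ)
    (hsub : Q ⊆ vec (m + 1))
    (heq : indSet (gammaIJ 1 2) m Q = vec m \ {d}) :
    Q = vec (m + 1) \ {d + 1} ∨ Q = vec (m + 1) \ {1, d + 1} ∨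
      Q = vec (m + 1) \ {2, d + 1} := by
  have key : ∀ t, (1 ≤ t ∧ t ≤ m ∧
      ((t = 1 ∧ (1 ∈ Q ∨ 2 ∈ Q)) ∨ (t ≠ 1 ∧ t < 2 ∧ t ∈ Q) ∨
        (t ≠ 1 ∧ 2 ≤ t ∧ t + 1 ∈ Q))) ↔ t ∈ vec m \ {d} := by
    intro t
    rw [← mem_indSet_gam m 1 2 (by omega) Q t, heq]
  have h12 : 1 ∈ Q ∨ 2 ∈ Q := by
    have h := (key 1).mpr (by simp [vec]; omega)
    rcases h.2.2 with ⟨_, h⟩ | ⟨h, _⟩ | ⟨h, _⟩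
    · exact h
    · exact absurd rfl h
    · exact absurd rfl h
  have hmem : ∀ x, 3 ≤ x → x ≤ m + 1 → (x ∈ Q ↔ x ≠ d + 1) := by
    intro x h3 hx1
    have h := key (x - 1)
    rw [show x - 1 + 1 = x from by omega] at h
    constructor
    · intro hxQ hxd
      have h2 := h.mp ⟨by omega, by omega, Or.inr (Or.inr ⟨by omega, by omega, hxQ⟩)⟩
      simp [vec] at h2
      omega
    · intro hne
      have h2 := h.mpr (by simp [vec]; omega)
      rcases h2.2.2 with ⟨h1', _⟩ | ⟨_, h2', _⟩ | ⟨_, _, hq⟩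
      · exact absurd h1' (by omega)
      · exact absurd h2' (by omega)
      · exact hq
  by_cases h1 : 1 ∈ Q <;> by_cases h2 : 2 ∈ Q
  · left
    ext x
    simp only [vec, Finset.mem_sdiff, Finset.mem_Icc, Finset.mem_singleton]
    constructor
    · intro hxQ
      have hb := hsub hxQ
      rw [vec, Finset.mem_Icc] at hb
      refine ⟨hb, fun hxd => ?_⟩
      exact ((hmem x (by omega) (by omega)).mp hxQ) hxd
    · rintro ⟨⟨hx1, hx2⟩, hne⟩
      rcases Nat.lt_or_ge x 3 with h | h
      · interval_cases x
        · exact h1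
        · exact h2
      · exact (hmem x h hx2).mpr hne
  · right; right
    ext x
    simp only [vec, Finset.mem_sdiff, Finset.mem_Icc, Finset.mem_insert,
      Finset.mem_singleton]
    constructor
    · intro hxQ
      have hb := hsub hxQ
      rw [vec, Finset.mem_Icc] at hb
      refine ⟨hb, fun hxd => ?_⟩
      rcases hxd with rfl | hxd
      · exact h2 hxQ
      · exact ((hmem x (by omega) (by omega)).mp hxQ) hxd
    · rintro ⟨⟨hx1, hx2⟩, hne⟩
      push_neg at hne
      rcases Nat.lt_or_ge x 3 with h | h
      · have : x = 1 := by omega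
        subst this; exact h1
      · exact (hmem x h hx2).mpr hne.2
  · right; left
    ext x
    simp only [vec, Finset.mem_sdiff, Finset.mem_Icc, Finset.mem_insert,
      Finset.mem_singleton]
    constructor
    · intro hxQ
      have hb := hsub hxQ
      rw [vec, Finset.mem_Icc] at hb
      refine ⟨hb, fun hxd => ?_⟩
      rcases hxd with rfl | hxd
      · exact h1 hxQ
      · exact ((hmem x (by omega) (by omega)).mp hxQ) hxd
    · rintro ⟨⟨hx1, hx2⟩, hne⟩
      push_neg at hne
      rcases Nat.lt_or_ge x 3 with h | h
      · have : x = 2 := by omega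
        subst this; exact h2
      · exact (hmem x h hx2).mpr hne.2
  · rcases h12 with h | h
    · exact absurd h h1
    · exact absurd h h2

lemma class_12_full (m : ℕ) (hm : 1 ≤ m) (Q : Finset ℕ) (hsub : Q ⊆ vec (m + 1))
    (heq : indSet (gammaIJ 1 2) m Q = vec m) :
    Q = vec (m + 1) ∨ Q = vec (m + 1) \ {1} ∨ Q = vec (m + 1) \ {2} := by
  have key : ∀ t, (1 ≤ t ∧ t ≤ m ∧
      ((t = 1 ∧ (1 ∈ Q ∨ 2 ∈ Q)) ∨ (t ≠ 1 ∧ t < 2 ∧ t ∈ Q) ∨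
        (t ≠ 1 ∧ 2 ≤ t ∧ t + 1 ∈ Q))) ↔ t ∈ vec m := by
    intro t
    rw [← mem_indSet_gam m 1 2 (by omega) Q t, heq]
  have h12 : 1 ∈ Q ∨ 2 ∈ Q := by
    have h := (key 1).mpr (by simp [vec]; omega)
    rcases h.2.2 with ⟨_, h⟩ | ⟨h, _⟩ | ⟨h, _⟩
    · exact h
    · exact absurd rfl h
    · exact absurd rfl h
  have hmem : ∀ x, 3 ≤ x → x ≤ m + 1 → x ∈ Q := by
    intro x h3 hx1
    have h := key (x - 1)
    rw [show x - 1 + 1 = x from by omega] at h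
    have h2 := h.mpr (by simp [vec]; omega)
    rcases h2.2.2 with ⟨h1', _⟩ | ⟨_, h2', _⟩ | ⟨_, _, hq⟩
    · exact absurd h1' (by omega)
    · exact absurd h2' (by omega)
    · exact hq
  by_cases h1 : 1 ∈ Q <;> by_cases h2 : 2 ∈ Q
  · left
    ext x
    simp only [vec, Finset.mem_Icc]
    constructor
    · intro hxQ
      have hb := hsub hxQ
      rwa [vec, Finset.mem_Icc] at hb
    · rintro ⟨hx1, hx2⟩
      rcases Nat.lt_or_ge x 3 with h | h
      · interval_cases x
        · exact h1
        · exact h2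
      · exact hmem x h hx2
  · right; right
    ext x
    simp only [vec, Finset.mem_sdiff, Finset.mem_Icc, Finset.mem_singleton]
    constructor
    · intro hxQ
      have hb := hsub hxQ
      rw [vec, Finset.mem_Icc] at hb
      refine ⟨hb, fun hxd => ?_⟩
      subst hxd; exact h2 hxQ
    · rintro ⟨⟨hx1, hx2⟩, hne⟩
      rcases Nat.lt_or_ge x 3 with h | h
      · have : x = 1 := by omega
        subst this; exact h1
      · exact hmem x h hx2
  · right; left
    ext x
    simp only [vec, Finset.mem_sdiff, Finset.mem_Icc, Finset.mem_singleton]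
    constructor
    · intro hxQ
      have hb := hsub hxQ
      rw [vec, Finset.mem_Icc] at hb
      refine ⟨hb, fun hxd => ?_⟩
      subst hxd; exact h1 hxQ
    · rintro ⟨⟨hx1, hx2⟩, hne⟩
      rcases Nat.lt_or_ge x 3 with h | h
      · have : x = 2 := by omega
        subst this; exact h2
      · exact hmem x h hx2
  · rcases h12 with h | h
    · exact absurd h h1
    · exact absurd h h2

theorem stmt3 (m e : ℕ) (he3 : 3 ≤ e) (hem : e ≤ m)
    (P : Set (Finset ℕ)) (hP : IsPattern (m + 1) P) (hst : IsStable (m + 1) (m + 1) P)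
    (hH : indPat (gammaIJ m (m + 1)) m P ∩ HPat m 1 1 = HPat m 1 e) :
    P ∩ HPat (m + 1) 1 1 = HPat (m + 1) 1 (e + 1) ∧
    (vec m ∈ indPat (gammaIJ m (m + 1)) m P → vec (m + 1) ∈ P) := by
  have hm3 : 3 ≤ m := le_trans he3 hem
  have nopPi : IsNOP (m + 1) m (gammaIJ m (m + 1)) :=
    nop_gam m m (m + 1) (by omega) (by omega) (by omega)
  have nop12 : IsNOP (m + 1) m (gammaIJ 1 2) :=
    nop_gam m 1 2 (by omega) (by omega) (by omega)
  -- helper: if `v \ {c}` lies in the induced pattern, then `e ≤ c`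
  have hQ : ∀ c, 1 ≤ c → c ≤ m →
      vec m \ {c} ∈ indPat (gammaIJ m (m + 1)) m P → e ≤ c := by
    intro c hc1 hc2 hmemQ
    have h1 : vec m \ {c} ∈ HPat m 1 e := by
      rw [← hH]
      exact ⟨hmemQ, (Hmem m 1 c le_rfl hc1 hc2).mpr hc1⟩
    exact (Hmem m e c (by omega) hc1 hc2).mp h1
  -- negatives
  have hneg : ∀ d, 1 ≤ d → d ≤ m + 1 → vec (m + 1) \ {d} ∈ P → e + 1 ≤ d := by
    intro d hd1 hd2 hdP
    by_contra hlt
    push_neg at hlt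
    rcases Nat.lt_or_ge d e with hde | hde
    · -- d < e ≤ m
      have h1 : vec m \ {d} ∈ indPat (gammaIJ m (m + 1)) m P := by
        have := Set.mem_image_of_mem (indSet (gammaIJ m (m + 1)) m) hdP
        rwa [calc_pi m d hd1 (by omega)] at this
      have := hQ d hd1 (by omega) h1
      omega
    · -- d = e
      have hde' : d = e := by omega
      subst hde'
      have h1 : vec m \ (singleton (d - 1)) ∈ indPat (gammaIJ 1 2) m P := by
        have := Set.mem_image_of_mem (indSet (gammaIJ 1 2) m) hdP
        rwa [calc_12 m d (by omega) (by omega)] at this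
      rw [← hst m (by omega) (by omega) (gammaIJ m (m + 1)) (gammaIJ 1 2) nopPi nop12] at h1
      have := hQ (d - 1) (by omega) (by omega) h1
      omega
  -- positives
  have hpos : ∀ d, e + 1 ≤ d → d ≤ m + 1 → vec (m + 1) \ {d} ∈ P := by
    intro d hd1 hd2
    have hvd : vec m \ (singleton (d - 1)) ∈ HPat m 1 e :=
      (Hmem m e (d - 1) (by omega) (by omega) (by omega)).mpr (by omega)
    rw [← hH] at hvd
    obtain ⟨hQmem, -⟩ := hvd
    rw [hst m (by omega) (by omega) (gammaIJ m (m + 1)) (gammaIJ 1 2) nopPi nop12] at hQmem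
    obtain ⟨Q', hQ'P, hQ'eq⟩ := hQmem
    have hsubQ' := (hP.2 Q' hQ'P).2
    have hcl := class_12 m (d - 1) (by omega) (by omega) Q' hsubQ' hQ'eq
    rw [show d - 1 + 1 = d from by omega] at hcl
    rcases hcl with h | h | h
    · exact h ▸ hQ'P
    · exfalso
      have h1 : vec m \ (singleton 1) ∈ indPat (gammaIJ 1 d) m P := by
        have := Set.mem_image_of_mem (indSet (gammaIJ 1 d) m) hQ'P
        rwa [h, calc_1p m d (by omega) (by omega)] at this
      rw [← hst m (by omega) (by omega) (gammaIJ m (m + 1)) (gammaIJ 1 d) nopPi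
        (nop_gam m 1 d (by omega) (by omega) (by omega))] at h1
      have := hQ 1 le_rfl (by omega) h1
      omega
    · exfalso
      have h1 : vec m \ (singleton 2) ∈ indPat (gammaIJ 2 d) m P := by
        have := Set.mem_image_of_mem (indSet (gammaIJ 2 d) m) hQ'P
        rwa [h, calc_2p m d (by omega) (by omega)] at this
      rw [← hst m (by omega) (by omega) (gammaIJ m (m + 1)) (gammaIJ 2 d) nopPi
        (nop_gam m 2 d (by omega) (by omega) (by omega))] at h1
      have := hQ 2 (by omega) (by omega) h1
      omega
  constructor
  · ext S
    constructor
    · rintro ⟨hSP, hSH⟩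
      obtain ⟨d, hd1, hd2, rfl⟩ := (mem_HPat_one (m + 1) 1 S).mp hSH
      exact (mem_HPat_one _ _ _).mpr ⟨d, hneg d hd1 hd2 hSP, hd2, rfl⟩
    · intro hS
      obtain ⟨d, hd1, hd2, rfl⟩ := (mem_HPat_one (m + 1) (e + 1) S).mp hS
      exact ⟨hpos d hd1 hd2, (mem_HPat_one _ _ _).mpr ⟨d, by omega, hd2, rfl⟩⟩
  · intro hvm
    rw [hst m (by omega) (by omega) (gammaIJ m (m + 1)) (gammaIJ 1 2) nopPi nop12] at hvm
    obtain ⟨Q', hQ'P, hQ'eq⟩ := hvm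
    rcases class_12_full m (by omega) Q' (hP.2 Q' hQ'P).2 hQ'eq with h | h | h
    · exact h ▸ hQ'P
    · exfalso
      have h1 : vec m \ (singleton 1) ∈ indPat (gammaIJ m (m + 1)) m P := by
        have := Set.mem_image_of_mem (indSet (gammaIJ m (m + 1)) m) hQ'P
        rwa [h, calc_pi m 1 le_rfl (by omega)] at this
      have := hQ 1 le_rfl (by omega) h1
      omega
    · exfalso
      have h1 : vec m \ (singleton 2) ∈ indPat (gammaIJ m (m + 1)) m P := by
        have := Set.mem_image_of_mem (indSet (gammaIJ m (m + 1)) m) hQ'P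
        rwa [h, calc_pi m 2 (by omega) (by omega)] at this
      have := hQ 2 (by omega) (by omega) h1
      omega
end

section
/- For every m ≥ 2 and every 1 ≤ j ≤ m, the m-pattern A_{j,m} is m-stable; moreover, for every γ ∈ Π(m,m-1), (A_{j,m})_γ = A_{j,m-1} when j ≤ m-1, and (A_{m,m})_γ = A_{m-1,m-1}. -/
open Finset

lemma indPat_APat (m k j : ℕ) (C : ℕ → Finset ℕ) (hC : IsNOP m k C) :
    indPat C k (APat j m) = APat (min j k) k := by
  classical
  obtain ⟨hne, hdisj, hcover, _⟩ := hC
  ext S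
  simp only [indPat, Set.mem_image, APat, Set.mem_setOf_eq]
  constructor
  · rintro ⟨P, ⟨hPne, hPsub, hPcard⟩, rfl⟩
    refine ⟨?_, ?_, le_min ?_ ?_⟩
    · obtain ⟨p, hp⟩ := hPne
      have hp' : p ∈ Finset.Icc 1 m := hPsub hp
      rw [← hcover] at hp'
      obtain ⟨i, hi, hpi⟩ := Finset.mem_biUnion.mp hp'
      exact ⟨i, Finset.mem_filter.mpr ⟨hi, ⟨p, Finset.mem_inter.mpr ⟨hpi, hp⟩⟩⟩⟩
    · intro i hi; exact (Finset.mem_filter.mp hi).1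
    · have hle : (indSet C k P).card ≤ P.card := by
        apply Finset.card_le_card_of_injOn
          (fun i => if h : (C i ∩ P).Nonempty then h.choose else 0)
        · intro i hi
          have h := (Finset.mem_filter.mp hi).2
          simp only [dif_pos h]
          exact (Finset.mem_inter.mp h.choose_spec).2
        · intro a ha b hb hab
          have hA := Finset.mem_filter.mp ha
          have hB := Finset.mem_filter.mp hb
          simp only [dif_pos hA.2, dif_pos hB.2] at hab
          by_contra hne'
          have h1 := (Finset.mem_inter.mp hA.2.choose_spec).1
          have h2 := (Finset.mem_inter.mp hB.2.choose_spec).1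
          rw [hab] at h1
          exact Finset.disjoint_left.mp (hdisj a hA.1 b hB.1 hne') h1 h2
      exact hle.trans hPcard
    · calc (indSet C k P).card ≤ (Finset.Icc 1 k).card :=
            Finset.card_le_card (Finset.filter_subset _ _)
        _ = k := by simp
  · rintro ⟨hSne, hSsub, hScard⟩
    set rep : ℕ → ℕ := fun i => if h : (C i).Nonempty then h.choose else 0 with hrep
    have hrepmem : ∀ i ∈ Finset.Icc 1 k, rep i ∈ C i := by
      intro i hi
      simp only [hrep, dif_pos (hne i hi)]
      exact (hne i hi).choose_spec
    have hSsub' : S ⊆ Finset.Icc 1 k := hSsub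
    refine ⟨S.image rep, ⟨?_, ?_, ?_⟩, ?_⟩
    · exact hSne.image _
    · intro p hp
      obtain ⟨i, hi, rfl⟩ := Finset.mem_image.mp hp
      have hmem := hrepmem i (hSsub' hi)
      show rep i ∈ Finset.Icc 1 m
      rw [← hcover]
      exact Finset.mem_biUnion.mpr ⟨i, hSsub' hi, hmem⟩
    · exact Finset.card_image_le.trans (hScard.trans (min_le_left _ _))
    · ext i
      simp only [indSet, Finset.mem_filter]
      constructor
      · rintro ⟨hi, q, hq⟩
        obtain ⟨hq1, hq2⟩ := Finset.mem_inter.mp hq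
        obtain ⟨i', hi', rfl⟩ := Finset.mem_image.mp hq2
        have h := hrepmem i' (hSsub' hi')
        by_cases hii : i = i'
        · subst hii; exact hi'
        · exact absurd hq1
            (Finset.disjoint_right.mp (hdisj i hi i' (hSsub' hi') hii) h)
      · intro hiS
        exact ⟨hSsub' hiS, ⟨rep i, Finset.mem_inter.mpr
          ⟨hrepmem i (hSsub' hiS), Finset.mem_image_of_mem _ hiS⟩⟩⟩

theorem stmt5 (m j : ℕ) (hm : 2 ≤ m) (hj1 : 1 ≤ j) (hjm : j ≤ m) :
    IsStable m m (APat j m) ∧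
    ∀ γ : ℕ → Finset ℕ, IsNOP m (m - 1) γ →
      (j ≤ m - 1 → indPat γ (m - 1) (APat j m) = APat j (m - 1)) ∧
      indPat γ (m - 1) (APat m m) = APat (m - 1) (m - 1) := by
  constructor
  · intro k' _ _ α β hα hβ
    rw [indPat_APat m k' j α hα, indPat_APat m k' j β hβ]
  · intro γ hγ
    constructor
    · intro hjm1
      rw [indPat_APat m (m-1) j γ hγ, min_eq_left hjm1]
    · rw [indPat_APat m (m-1) m γ hγ, min_eq_right (Nat.sub_le m 1)]
end

section
/- For every m ≥ 2 and every 1 ≤ j ≤ m, the m-pattern A¹_{j,m} is m-stable; moreover, for every γ ∈ Π(m,m-1), (A¹_{j,m})_γ = A¹_{j,m-1} when j ≤ m-1, and (A¹_{m,m})_γ = A¹_{m-1,m-1}. -/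
open Finset

lemma nop_subset {m k : ℕ} {C : ℕ → Finset ℕ} (h : IsNOP m k C) {i : ℕ}
    (hi : i ∈ Finset.Icc 1 k) : C i ⊆ Finset.Icc 1 m := by
  intro x hx
  rw [← h.2.2.1]
  exact Finset.mem_biUnion.mpr ⟨i, hi, hx⟩

lemma nop_one_mem {m k : ℕ} {C : ℕ → Finset ℕ} (hk : 1 ≤ k) (hm : 1 ≤ m)
    (h : IsNOP m k C) : 1 ∈ C 1 := by
  have h1 : (1:ℕ) ∈ Finset.Icc 1 m := Finset.mem_Icc.mpr ⟨le_refl _, hm⟩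
  rw [← h.2.2.1] at h1
  obtain ⟨i, hi, hmem⟩ := Finset.mem_biUnion.mp h1
  have h1k : (1:ℕ) ∈ Finset.Icc 1 k := Finset.mem_Icc.mpr ⟨le_refl _, hk⟩
  rcases eq_or_lt_of_le (Finset.mem_Icc.mp hi).1 with he | hlt
  · rwa [← he] at hmem
  · exfalso
    have hlt2 := h.2.2.2 1 h1k i hi hlt
    have hle : (C i).min ≤ ((1:ℕ) : WithTop ℕ) := Finset.min_le hmem
    have hge : ((1:ℕ) : WithTop ℕ) ≤ (C 1).min := by
      apply Finset.le_min
      intro y hy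
      have : (1:ℕ) ≤ y := (Finset.mem_Icc.mp (nop_subset h h1k hy)).1
      simpa using WithTop.coe_le_coe.mpr this
    exact absurd (lt_of_lt_of_le hlt2 (le_trans hle hge)) (lt_irrefl _)

lemma indPat_A1 {m k j : ℕ} (hk : 1 ≤ k) (hkm : k ≤ m) (hj : 1 ≤ j)
    {C : ℕ → Finset ℕ} (hC : IsNOP m k C) :
    indPat C k (A1Pat j m) = A1Pat (min j k) k := by
  have hm : 1 ≤ m := le_trans hk hkm
  have h1k : (1:ℕ) ∈ Finset.Icc 1 k := Finset.mem_Icc.mpr ⟨le_refl _, hk⟩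
  have h1C : 1 ∈ C 1 := nop_one_mem hk hm hC
  ext T
  constructor
  · rintro ⟨P, ⟨hP1, hPsub, hPcard⟩, rfl⟩
    refine ⟨?_, ?_, ?_⟩
    · exact Finset.mem_filter.mpr ⟨h1k, ⟨1, Finset.mem_inter.mpr ⟨h1C, hP1⟩⟩⟩
    · exact Finset.filter_subset _ _
    · rw [le_min_iff]
      constructor
      · refine le_trans ?_ hPcard
        set f : ℕ → ℕ := fun t =>
          if h : ((C t) ∩ P).Nonempty then ((C t) ∩ P).min' h else 0 with hf
        apply Finset.card_le_card_of_injOn f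
        · intro t ht
          obtain ⟨htk, hne⟩ := Finset.mem_filter.mp ht
          have : f t ∈ (C t) ∩ P := by
            rw [hf]; simp only [dif_pos hne]; exact Finset.min'_mem _ hne
          exact (Finset.mem_inter.mp this).2
        · intro t ht s hs heq
          obtain ⟨htk, hnet⟩ := Finset.mem_filter.mp ht
          obtain ⟨hsk, hnes⟩ := Finset.mem_filter.mp hs
          by_contra hne
          have h1 : f t ∈ (C t) ∩ P := by
            rw [hf]; simp only [dif_pos hnet]; exact Finset.min'_mem _ hnet
          have h2 : f s ∈ (C s) ∩ P := by
            rw [hf]; simp only [dif_pos hnes]; exact Finset.min'_mem _ hnes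
          have hdis := hC.2.1 t htk s hsk hne
          have h2t : f t ∈ C s := by rw [heq]; exact (Finset.mem_inter.mp h2).1
          exact Finset.disjoint_left.mp hdis (Finset.mem_inter.mp h1).1 h2t
      · calc ((Finset.Icc 1 k).filter _).card ≤ (Finset.Icc 1 k).card :=
              Finset.card_le_card (Finset.filter_subset _ _)
          _ = k := by simp
  · rintro ⟨hT1, hTsub, hTcard⟩
    rw [le_min_iff] at hTcard
    set g : ℕ → ℕ := fun t => if h : (C t).Nonempty then (C t).min' h else 0 with hg
    have hgmem : ∀ t ∈ Finset.Icc 1 k, g t ∈ C t := by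
      intro t ht
      have hne := hC.1 t ht
      rw [hg]; simp only [dif_pos hne]; exact Finset.min'_mem _ hne
    have hg1 : g 1 = 1 := by
      have hne := hC.1 1 h1k
      rw [hg]; simp only [dif_pos hne]
      apply le_antisymm (Finset.min'_le _ _ h1C)
      exact (Finset.mem_Icc.mp (nop_subset hC h1k (Finset.min'_mem _ hne))).1
    refine ⟨T.image g, ⟨?_, ?_, ?_⟩, ?_⟩
    · exact Finset.mem_image.mpr ⟨1, hT1, hg1⟩
    · intro x hx
      obtain ⟨t, ht, rfl⟩ := Finset.mem_image.mp hx
      exact nop_subset hC (hTsub ht) (hgmem t (hTsub ht))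
    · exact le_trans (Finset.card_image_le) hTcard.1
    · ext t
      simp only [indSet, Finset.mem_filter]
      constructor
      · rintro ⟨htk, x, hx⟩
        obtain ⟨hxC, hxP⟩ := Finset.mem_inter.mp hx
        obtain ⟨s, hs, rfl⟩ := Finset.mem_image.mp hxP
        by_contra htT
        have hts : t ≠ s := fun h => htT (h ▸ hs)
        exact Finset.disjoint_left.mp (hC.2.1 t htk s (hTsub hs) hts) hxC
          (hgmem s (hTsub hs))
      · intro htT
        exact ⟨hTsub htT, ⟨g t, Finset.mem_inter.mpr
          ⟨hgmem t (hTsub htT), Finset.mem_image.mpr ⟨t, htT, rfl⟩⟩⟩⟩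

theorem stmt6 (m j : ℕ) (hm : 2 ≤ m) (hj1 : 1 ≤ j) (hjm : j ≤ m) :
    IsStable m m (A1Pat j m) ∧
    ∀ γ : ℕ → Finset ℕ, IsNOP m (m - 1) γ →
      (j ≤ m - 1 → indPat γ (m - 1) (A1Pat j m) = A1Pat j (m - 1)) ∧
      indPat γ (m - 1) (A1Pat m m) = A1Pat (m - 1) (m - 1) := by
  have hm1 : 1 ≤ m - 1 := le_tsub_of_add_le_left hm
  have hm1m : m - 1 ≤ m := Nat.sub_le m 1
  constructor
  · intro k' hk'2 hk'm α β hα hβ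
    rw [indPat_A1 (le_trans one_le_two hk'2) hk'm hj1 hα,
        indPat_A1 (le_trans one_le_two hk'2) hk'm hj1 hβ]
  · intro γ hγ
    constructor
    · intro hjm1
      rw [indPat_A1 hm1 hm1m hj1 hγ, min_eq_left hjm1]
    · rw [indPat_A1 hm1 hm1m (le_trans one_le_two hm) hγ, min_eq_right hm1m]
end

section
/- For all integers r,s,m with 2 ≤ r < r+1 < s < m, the m-pattern D^m_{r,s} is m-stable and for every γ ∈ Π(m,m-1) one has (D^m_{r,s})_γ = D^{m-1}_{r-1,s-1}. -/
open Finset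

/-- collapse map: identity below `y`, sends `y` to `x`, shifts down above `y`. -/
def gmap (x y z : ℕ) : ℕ := if z < y then z else if z = y then x else z - 1

/-- section of `gmap`: identity below `y`, shifts up from `y` on. -/
def glift (y z : ℕ) : ℕ := if z < y then z else z + 1

/-- hole collapse map (used away from `y`). -/
def fmap (y d : ℕ) : ℕ := if d < y then d else d - 1

lemma gmap_le (x y z : ℕ) (hxy : x < y) : gmap x y z ≤ z := by
  unfold gmap; split_ifs <;> omega

lemma gmap_glift (x y z : ℕ) (hxy : x < y) : gmap x y (glift y z) = z := by
  unfold gmap glift; split_ifs <;> omega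

lemma fmap_glift (y z : ℕ) : fmap y (glift y z) = z := by
  unfold fmap glift; split_ifs <;> omega

lemma glift_ne (y z : ℕ) : glift y z ≠ y := by
  unfold glift; split_ifs <;> omega

lemma glift_inj (y : ℕ) : Function.Injective (glift y) := by
  intro a b h; unfold glift at h; split_ifs at h <;> omega

lemma gmap_eq_iff (x y z w : ℕ) (hxy : x < y) :
    gmap x y z = gmap x y w ↔ (z = w ∨ (z = x ∧ w = y) ∨ (z = y ∧ w = x)) := by
  unfold gmap; split_ifs <;> omega

lemma gmap_mem_vec {m x y z : ℕ} (hx : 1 ≤ x) (hxy : x < y) (hym : y ≤ m)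
    (hz : z ∈ vec m) : gmap x y z ∈ vec (m - 1) := by
  simp only [vec, mem_Icc] at *
  unfold gmap; split_ifs <;> omega

lemma image_gmap_vec {m x y : ℕ} (hx : 1 ≤ x) (hxy : x < y) (hym : y ≤ m) :
    (vec m).image (gmap x y) = vec (m - 1) := by
  apply Finset.Subset.antisymm
  · intro c hc
    simp only [mem_image] at hc
    obtain ⟨z, hz, rfl⟩ := hc
    exact gmap_mem_vec hx hxy hym hz
  · intro c hc
    simp only [vec, mem_Icc] at hc
    simp only [mem_image]
    refine ⟨glift y c, ?_, gmap_glift x y c hxy⟩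
    simp only [vec, mem_Icc]
    unfold glift; split_ifs <;> omega
/-- the induced hole set after collapsing `y` onto `x`. -/
def Dp (x y : ℕ) (D : Finset ℕ) : Finset ℕ :=
  if x ∈ D ∧ y ∈ D then (D.erase y).image (fmap y)
  else ((D.erase y).image (fmap y)).erase x

lemma Dp_elem {x y : ℕ} {D : Finset ℕ} {c : ℕ} (hc : c ∈ Dp x y D) :
    ∃ d ∈ D, d ≠ y ∧ c = fmap y d := by
  unfold Dp at hc
  split_ifs at hc with h
  · simp only [mem_image, mem_erase] at hc
    obtain ⟨d, ⟨hdy, hdD⟩, hfd⟩ := hc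
    exact ⟨d, hdD, hdy, hfd.symm⟩
  · rw [mem_erase] at hc
    simp only [mem_image, mem_erase] at hc
    obtain ⟨_, d, ⟨hdy, hdD⟩, hfd⟩ := hc
    exact ⟨d, hdD, hdy, hfd.symm⟩

lemma mem_Dp_all_preim {x y : ℕ} (hx : 1 ≤ x) (hxy : x < y) {D : Finset ℕ} {c : ℕ}
    (hc : c ∈ Dp x y D) : ∀ z, 1 ≤ z → gmap x y z = c → z ∈ D := by
  intro z hz1 hzc
  obtain ⟨d, hdD, hdy, hcd⟩ := Dp_elem hc
  have hcx : ¬ (x ∈ D ∧ y ∈ D) → c ≠ x := by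
    intro hb
    unfold Dp at hc
    rw [if_neg hb, mem_erase] at hc
    exact hc.1
  by_cases hdlt : d < y
  · -- c = d < y
    have hcd' : c = d := by unfold fmap at hcd; split_ifs at hcd <;> omega
    unfold gmap at hzc
    split_ifs at hzc with h1 h2
    · have : z = d := by omega
      subst this; exact hdD
    · -- z = y, c = x
      by_cases hb : x ∈ D ∧ y ∈ D
      · subst h2; exact hb.2
      · exact absurd (by omega) (hcx hb)
    · exfalso; omega
  · -- d > y, c = d - 1 ≥ y
    have hcd' : c = d - 1 ∧ d > y := by
      unfold fmap at hcd; split_ifs at hcd <;> constructor <;> omega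
    unfold gmap at hzc
    split_ifs at hzc with h1 h2
    · exfalso; omega
    · exfalso; omega
    · have : z = d := by omega
      subst this; exact hdD

lemma notMem_Dp_preim {m x y : ℕ} (hx : 1 ≤ x) (hxy : x < y) (hym : y ≤ m)
    {D : Finset ℕ} {c : ℕ} (hc1 : 1 ≤ c) (hc2 : c ≤ m - 1) (hc : c ∉ Dp x y D) :
    ∃ z, 1 ≤ z ∧ z ≤ m ∧ z ∉ D ∧ gmap x y z = c := by
  have hxE : ∀ (E : Finset ℕ), x ∈ (E.erase y).image (fmap y) ↔ x ∈ E.erase y := by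
    intro E
    constructor
    · intro h
      simp only [mem_image, mem_erase] at h
      obtain ⟨d, ⟨hdy, hdD⟩, hfd⟩ := h
      have : d = x := by unfold fmap at hfd; split_ifs at hfd <;> omega
      subst this; exact mem_erase.mpr ⟨hdy, hdD⟩
    · intro h
      simp only [mem_image]
      exact ⟨x, h, by unfold fmap; split_ifs <;> omega⟩
  by_cases hcy : y ≤ c
  · refine ⟨c + 1, by omega, by omega, ?_, by unfold gmap; split_ifs <;> omega⟩
    intro hmem
    apply hc
    have himg : c ∈ (D.erase y).image (fmap y) := by
      simp only [mem_image, mem_erase]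
      exact ⟨c + 1, ⟨by omega, hmem⟩, by unfold fmap; split_ifs <;> omega⟩
    unfold Dp
    split_ifs with h
    · exact himg
    · exact mem_erase.mpr ⟨by omega, himg⟩
  · push_neg at hcy
    by_cases hcx : c = x
    · by_cases hxD : x ∈ D
      · by_cases hyD : y ∈ D
        · exfalso
          apply hc
          unfold Dp
          rw [if_pos ⟨hxD, hyD⟩, hcx]
          exact (hxE D).mpr (mem_erase.mpr ⟨by omega, hxD⟩)
        · exact ⟨y, by omega, hym, hyD, by unfold gmap; split_ifs <;> omega⟩
      · exact ⟨x, hx, by omega, hxD, by unfold gmap; split_ifs <;> omega⟩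
    · refine ⟨c, hc1, by omega, ?_, by unfold gmap; split_ifs <;> omega⟩
      intro hmem
      apply hc
      have himg : c ∈ (D.erase y).image (fmap y) := by
        simp only [mem_image, mem_erase]
        exact ⟨c, ⟨by omega, hmem⟩, by unfold fmap; split_ifs <;> omega⟩
      unfold Dp
      split_ifs with h
      · exact himg
      · exact mem_erase.mpr ⟨hcx, himg⟩

lemma image_sdiff_gmap {m x y : ℕ} (hx : 1 ≤ x) (hxy : x < y) (hym : y ≤ m)
    (D : Finset ℕ) :
    (vec m \ D).image (gmap x y) = vec (m - 1) \ Dp x y D := by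
  apply Finset.Subset.antisymm
  · intro c hc
    simp only [mem_image, mem_sdiff] at hc
    obtain ⟨z, ⟨hzv, hzD⟩, rfl⟩ := hc
    rw [mem_sdiff]
    refine ⟨gmap_mem_vec hx hxy hym hzv, ?_⟩
    intro hcd
    have hz1 : 1 ≤ z := by simp only [vec, mem_Icc] at hzv; omega
    exact hzD (mem_Dp_all_preim hx hxy hcd z hz1 rfl)
  · intro c hc
    rw [mem_sdiff] at hc
    obtain ⟨hcv, hcD⟩ := hc
    simp only [vec, mem_Icc] at hcv
    obtain ⟨z, hz1, hzm, hzD, hzc⟩ := notMem_Dp_preim hx hxy hym hcv.1 hcv.2 hcD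
    simp only [mem_image, mem_sdiff]
    exact ⟨z, ⟨by simp only [vec, mem_Icc]; omega, hzD⟩, hzc⟩
lemma card_image_fmap (y : ℕ) (D : Finset ℕ) :
    ((D.erase y).image (fmap y)).card = (D.erase y).card := by
  apply Finset.card_image_of_injOn
  intro a ha b hb hab
  rw [Finset.coe_erase, Set.mem_diff] at ha hb
  have ha' : a ≠ y := by simpa using ha.2
  have hb' : b ≠ y := by simpa using hb.2
  unfold fmap at hab; split_ifs at hab <;> omega

lemma x_mem_image_fmap {x y : ℕ} (hxy : x < y) (D : Finset ℕ) :
    x ∈ (D.erase y).image (fmap y) ↔ x ∈ D := by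
  constructor
  · intro h
    simp only [mem_image, mem_erase] at h
    obtain ⟨d, ⟨hdy, hdD⟩, hfd⟩ := h
    have : d = x := by unfold fmap at hfd; split_ifs at hfd <;> omega
    subst this; exact hdD
  · intro h
    simp only [mem_image, mem_erase]
    exact ⟨x, ⟨by omega, h⟩, by unfold fmap; split_ifs <;> omega⟩

lemma Dp_card_notmem {x y : ℕ} (hxy : x < y) {D : Finset ℕ}
    (hx : x ∉ D) (hy : y ∉ D) : (Dp x y D).card = D.card := by
  unfold Dp
  rw [if_neg (by tauto)]
  rw [Finset.erase_eq_of_notMem (by rw [x_mem_image_fmap hxy]; exact hx)]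
  rw [card_image_fmap, Finset.erase_eq_of_notMem hy]

lemma Dp_card_mem {x y : ℕ} (hxy : x < y) {D : Finset ℕ}
    (h : x ∈ D ∨ y ∈ D) : (Dp x y D).card + 1 = D.card := by
  by_cases hxD : x ∈ D
  · by_cases hyD : y ∈ D
    · unfold Dp
      rw [if_pos ⟨hxD, hyD⟩, card_image_fmap, Finset.card_erase_of_mem hyD]
      have := Finset.card_pos.mpr ⟨y, hyD⟩
      omega
    · unfold Dp
      rw [if_neg (by tauto)]
      rw [Finset.card_erase_of_mem (by rw [x_mem_image_fmap hxy]; exact hxD)]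
      rw [card_image_fmap, Finset.erase_eq_of_notMem hyD]
      have h1 : x ∈ (D.erase y).image (fmap y) := by rw [x_mem_image_fmap hxy]; exact hxD
      have h2 : ((D.erase y).image (fmap y)).Nonempty := ⟨x, h1⟩
      have := Finset.card_pos.mpr h2
      rw [card_image_fmap, Finset.erase_eq_of_notMem hyD] at this
      omega
  · have hyD : y ∈ D := by tauto
    unfold Dp
    rw [if_neg (by tauto)]
    rw [Finset.erase_eq_of_notMem (by rw [x_mem_image_fmap hxy]; exact hxD)]
    rw [card_image_fmap, Finset.card_erase_of_mem hyD]
    have := Finset.card_pos.mpr ⟨y, hyD⟩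
    omega
lemma card_vec (m : ℕ) : (vec m).card = m := by
  simp [vec, Nat.card_Icc]

lemma mem_DPat_iff {m r s : ℕ} (S : Finset ℕ) (hs : r + 2 ≤ s) :
    S ∈ DPat m r s ↔
      (1 ∈ S ∧ S ⊆ vec m ∧ S.card ≤ m - r - 1) ∨
      (∃ D : Finset ℕ, 1 ≤ D.card ∧ D.card ≤ r ∧
        (∀ d ∈ D, d ≤ m ∧ s + 1 ≤ d + D.card) ∧ S = vec m \ D) ∨
      S = vec m := by
  simp only [DPat, Set.mem_union, Set.mem_iUnion, Set.mem_singleton_iff,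
    A1Pat, HPat, Set.mem_setOf_eq, Finset.mem_Icc, or_assoc]
  constructor
  · rintro (h | ⟨h, ⟨h1, h2⟩, D, hcard, hsub, rfl⟩ | h)
    · exact Or.inl h
    · refine Or.inr (Or.inl ⟨D, by omega, by omega, ?_, rfl⟩)
      intro d hd
      have := hsub hd
      rw [Finset.mem_Icc] at this
      omega
    · exact Or.inr (Or.inr h)
  · rintro (h | ⟨D, hc1, hcr, hbd, rfl⟩ | h)
    · exact Or.inl h
    · refine Or.inr (Or.inl ⟨D.card, ⟨hc1, hcr⟩, D, rfl, ?_, rfl⟩)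
      intro d hd
      rw [Finset.mem_Icc]
      have := hbd d hd
      omega
    · exact Or.inr (Or.inr h)

lemma DPat_zero {m : ℕ} (hm : 1 ≤ m) (s : ℕ) :
    DPat m 0 s = {S : Finset ℕ | 1 ∈ S ∧ S ⊆ vec m} := by
  ext S
  simp only [DPat, Set.mem_union, Set.mem_iUnion, Set.mem_singleton_iff,
    A1Pat, Set.mem_setOf_eq, Finset.mem_Icc]
  have hIcc : Finset.Icc 1 0 = (∅ : Finset ℕ) := Finset.Icc_eq_empty (by omega)
  constructor
  · rintro ((⟨h1, h2, _⟩ | ⟨h, hh, _⟩) | rfl)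
    · exact ⟨h1, h2⟩
    · omega
    · exact ⟨by simp [vec, Finset.mem_Icc]; omega, subset_rfl⟩
  · rintro ⟨h1, h2⟩
    by_cases hc : S.card ≤ m - 0 - 1
    · exact Or.inl (Or.inl ⟨h1, h2, hc⟩)
    · have hcard : (vec m).card ≤ S.card := by
        rw [card_vec]; omega
      exact Or.inr (Finset.eq_of_subset_of_card_le h2 hcard)
lemma gmap_one {x y : ℕ} (hx : 1 ≤ x) (hxy : x < y) : gmap x y 1 = 1 := by
  unfold gmap; split_ifs <;> omega

lemma glift_one {y : ℕ} (hy : 2 ≤ y) : glift y 1 = 1 := by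
  unfold glift; split_ifs <;> omega

lemma gmap_comp_glift {x y : ℕ} (hxy : x < y) : gmap x y ∘ glift y = id :=
  funext fun z => gmap_glift x y z hxy

lemma fmap_comp_glift (y : ℕ) : fmap y ∘ glift y = id :=
  funext fun z => fmap_glift y z

lemma y_notMem_glift_image (y : ℕ) (D : Finset ℕ) : y ∉ D.image (glift y) := by
  simp only [mem_image, not_exists]
  intro c
  rintro ⟨hc, hgc⟩
  exact glift_ne y c hgc

lemma erase_union_y (y : ℕ) (D : Finset ℕ) :
    (D.image (glift y) ∪ {y}).erase y = D.image (glift y) := by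
  ext d
  simp only [mem_erase, mem_union, mem_singleton]
  constructor
  · rintro ⟨hd, hdA | rfl⟩
    · exact hdA
    · exact absurd rfl hd
  · intro hdA
    exact ⟨fun h => y_notMem_glift_image y D (h ▸ hdA), Or.inl hdA⟩

lemma glift_image_card (y : ℕ) (D : Finset ℕ) : (D.image (glift y)).card = D.card :=
  Finset.card_image_of_injective D (glift_inj y)

lemma glift_image_fmap (y : ℕ) (D : Finset ℕ) :
    (D.image (glift y)).image (fmap y) = D := by
  rw [Finset.image_image, fmap_comp_glift, Finset.image_id]

lemma step {m r s x y : ℕ} (hr : 1 ≤ r) (hs : r + 2 ≤ s) (hsm : s < m)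
    (hx : 1 ≤ x) (hxy : x < y) (hym : y ≤ m) :
    (fun P : Finset ℕ => P.image (gmap x y)) '' DPat m r s
      = DPat (m - 1) (r - 1) (s - 1) := by
  have hs' : (r - 1) + 2 ≤ s - 1 := by omega
  ext Q
  simp only [Set.mem_image]
  constructor
  · rintro ⟨P, hP, rfl⟩
    rw [mem_DPat_iff P hs] at hP
    rw [mem_DPat_iff _ hs']
    rcases hP with ⟨h1, hsub, hcard⟩ | ⟨D, hc1, hcr, hbd, rfl⟩ | rfl
    · -- A1 case
      left
      refine ⟨?_, ?_, ?_⟩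
      · have h := Finset.mem_image_of_mem (gmap x y) h1
        rwa [gmap_one hx hxy] at h
      · intro c hc
        rw [Finset.mem_image] at hc
        obtain ⟨z, hz, rfl⟩ := hc
        exact gmap_mem_vec hx hxy hym (hsub hz)
      · have h2 : (m - 1) - (r - 1) - 1 = m - r - 1 := by omega
        rw [h2]
        exact le_trans Finset.card_image_le hcard
    · -- H case
      rw [image_sdiff_gmap hx hxy hym D]
      by_cases hmem : x ∈ D ∨ y ∈ D
      · have hcard' : (Dp x y D).card + 1 = D.card := Dp_card_mem hxy hmem
        have hbd' : ∀ c ∈ Dp x y D, c ≤ m - 1 ∧ s + 1 ≤ c + D.card := by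
          intro c hc
          obtain ⟨d, hdD, hdy, rfl⟩ := Dp_elem hc
          have hdb := hbd d hdD
          constructor
          · unfold fmap; split_ifs <;> omega
          · unfold fmap
            split_ifs with h
            · omega
            · rcases hmem with hxD | hyD
              · have := hbd x hxD; omega
              · have := hbd y hyD; omega
        by_cases hz : (Dp x y D).card = 0
        · right; right
          rw [Finset.card_eq_zero.mp hz, Finset.sdiff_empty]
        · right; left
          refine ⟨Dp x y D, by omega, by omega, ?_, rfl⟩
          intro c hc
          have := hbd' c hc
          omega
      · push_neg at hmem
        have hcard' : (Dp x y D).card = D.card := Dp_card_notmem hxy hmem.1 hmem.2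
        have hbd' : ∀ c ∈ Dp x y D, c ≤ m - 1 ∧ s ≤ c + D.card := by
          intro c hc
          obtain ⟨d, hdD, hdy, rfl⟩ := Dp_elem hc
          have hdb := hbd d hdD
          unfold fmap
          constructor <;> [skip; skip] <;> split_ifs <;> omega
        by_cases hrr : D.card ≤ r - 1
        · right; left
          refine ⟨Dp x y D, by omega, by omega, ?_, rfl⟩
          intro c hc
          have := hbd' c hc
          omega
        · -- D.card = r : lands in A1
          left
          have hsubDp : Dp x y D ⊆ vec (m - 1) := by
            intro c hc
            have h2 := hbd' c hc
            simp only [vec, Finset.mem_Icc]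
            omega
          refine ⟨?_, Finset.sdiff_subset, ?_⟩
          · rw [Finset.mem_sdiff]
            constructor
            · simp only [vec, Finset.mem_Icc]; omega
            · intro h1
              have := hbd' 1 h1
              omega
          · rw [Finset.card_sdiff_of_subset hsubDp, card_vec]
            omega
    · -- P = vec m
      right; right
      exact image_gmap_vec hx hxy hym
  · rw [mem_DPat_iff _ hs']
    rintro (⟨h1, hsub, hcard⟩ | ⟨D', hc1, hcr, hbd, rfl⟩ | rfl)
    · -- A1 target
      refine ⟨Q.image (glift y), ?_, ?_⟩
      · rw [mem_DPat_iff _ hs]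
        left
        refine ⟨?_, ?_, ?_⟩
        · have h := Finset.mem_image_of_mem (glift y) h1
          rwa [glift_one (by omega)] at h
        · intro z hz
          rw [Finset.mem_image] at hz
          obtain ⟨c, hc, rfl⟩ := hz
          have := hsub hc
          simp only [vec, Finset.mem_Icc] at this ⊢
          unfold glift; split_ifs <;> omega
        · have h2 : (m - 1) - (r - 1) - 1 = m - r - 1 := by omega
          rw [h2] at hcard
          exact le_trans Finset.card_image_le hcard
      · rw [Finset.image_image, gmap_comp_glift hxy, Finset.image_id]
    · -- H target
      have hDbig : ∀ c ∈ D', s ≤ c + D'.card ∧ c ≤ m - 1 := by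
        intro c hc
        have := hbd c hc
        omega
      by_cases hxD' : x ∈ D'
      · -- both case
        refine ⟨vec m \ (D'.image (glift y) ∪ {y}), ?_, ?_⟩
        · rw [mem_DPat_iff _ hs]
          right; left
          have hcardD : (D'.image (glift y) ∪ {y}).card = D'.card + 1 := by
            rw [Finset.card_union_of_disjoint
              (Finset.disjoint_singleton_right.mpr (y_notMem_glift_image y D')),
              glift_image_card, Finset.card_singleton]
          refine ⟨_, by omega, by omega, ?_, rfl⟩
          intro d hd
          rw [Finset.mem_union, Finset.mem_singleton] at hd
          rw [hcardD]
          rcases hd with hd | rfl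
          · rw [Finset.mem_image] at hd
            obtain ⟨c, hc, rfl⟩ := hd
            have := hDbig c hc
            unfold glift; split_ifs <;> omega
          · have := hDbig x hxD'
            omega
        · rw [image_sdiff_gmap hx hxy hym]
          congr 1
          have hxA : x ∈ D'.image (glift y) := by
            rw [Finset.mem_image]
            exact ⟨x, hxD', by unfold glift; split_ifs <;> omega⟩
          unfold Dp
          rw [if_pos ⟨Finset.mem_union_left _ hxA, Finset.mem_union_right _ (Finset.mem_singleton_self y)⟩]
          rw [erase_union_y, glift_image_fmap]
      · by_cases hex : ∃ c ∈ D', c < y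
        · -- add y as extra hole
          obtain ⟨c0, hc0, hc0y⟩ := hex
          refine ⟨vec m \ (D'.image (glift y) ∪ {y}), ?_, ?_⟩
          · rw [mem_DPat_iff _ hs]
            right; left
            have hcardD : (D'.image (glift y) ∪ {y}).card = D'.card + 1 := by
              rw [Finset.card_union_of_disjoint
                (Finset.disjoint_singleton_right.mpr (y_notMem_glift_image y D')),
                glift_image_card, Finset.card_singleton]
            refine ⟨_, by omega, by omega, ?_, rfl⟩
            intro d hd
            rw [Finset.mem_union, Finset.mem_singleton] at hd
            rw [hcardD]
            rcases hd with hd | rfl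
            · rw [Finset.mem_image] at hd
              obtain ⟨c, hc, rfl⟩ := hd
              have := hDbig c hc
              unfold glift; split_ifs <;> omega
            · have := hDbig c0 hc0
              omega
          · rw [image_sdiff_gmap hx hxy hym]
            congr 1
            have hxD : x ∉ D'.image (glift y) ∪ {y} := by
              rw [Finset.mem_union, Finset.mem_singleton]
              rintro (hmem | rfl)
              · rw [Finset.mem_image] at hmem
                obtain ⟨c, hc, hgc⟩ := hmem
                have : c = x := by unfold glift at hgc; split_ifs at hgc <;> omega
                exact hxD' (this ▸ hc)
              · omega
            unfold Dp
            rw [if_neg (fun h => hxD h.1)]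
            rw [erase_union_y, glift_image_fmap, Finset.erase_eq_of_notMem hxD']
        · -- no extra hole needed
          push_neg at hex
          refine ⟨vec m \ D'.image (glift y), ?_, ?_⟩
          · rw [mem_DPat_iff _ hs]
            right; left
            refine ⟨_, by rw [glift_image_card]; omega, by rw [glift_image_card]; omega, ?_, rfl⟩
            intro d hd
            rw [glift_image_card]
            rw [Finset.mem_image] at hd
            obtain ⟨c, hc, rfl⟩ := hd
            have h2 := hDbig c hc
            have h3 := hex c hc
            unfold glift; split_ifs <;> omega
          · rw [image_sdiff_gmap hx hxy hym]
            congr 1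
            have hxD : x ∉ D'.image (glift y) := by
              rw [Finset.mem_image]
              rintro ⟨c, hc, hgc⟩
              have h3 := hex c hc
              have : c = x := by unfold glift at hgc; split_ifs at hgc <;> omega
              omega
            unfold Dp
            rw [if_neg (fun h => hxD h.1)]
            rw [Finset.erase_eq_of_notMem (y_notMem_glift_image y D'), glift_image_fmap,
              Finset.erase_eq_of_notMem hxD']
    · -- vec target
      exact ⟨vec m, by rw [mem_DPat_iff _ hs]; right; right; rfl, image_gmap_vec hx hxy hym⟩

lemma step0 {m x y : ℕ} (hm : 2 ≤ m) (hx : 1 ≤ x) (hxy : x < y) (hym : y ≤ m) (s s' : ℕ) :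
    (fun P : Finset ℕ => P.image (gmap x y)) '' DPat m 0 s = DPat (m - 1) 0 s' := by
  rw [DPat_zero (by omega) s, DPat_zero (by omega) s']
  ext Q
  simp only [Set.mem_image, Set.mem_setOf_eq]
  constructor
  · rintro ⟨P, ⟨h1, hsub⟩, rfl⟩
    constructor
    · have h := Finset.mem_image_of_mem (gmap x y) h1
      rwa [gmap_one hx hxy] at h
    · intro c hc
      rw [Finset.mem_image] at hc
      obtain ⟨z, hz, rfl⟩ := hc
      exact gmap_mem_vec hx hxy hym (hsub hz)
  · rintro ⟨h1, hsub⟩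
    refine ⟨Q.image (glift y), ⟨?_, ?_⟩, ?_⟩
    · have h := Finset.mem_image_of_mem (glift y) h1
      rwa [glift_one (by omega)] at h
    · intro z hz
      rw [Finset.mem_image] at hz
      obtain ⟨c, hc, rfl⟩ := hz
      have := hsub hc
      simp only [vec, Finset.mem_Icc] at this ⊢
      unfold glift; split_ifs <;> omega
    · rw [Finset.image_image, gmap_comp_glift hxy, Finset.image_id]
lemma NOP_block_subset {m k : ℕ} {γ : ℕ → Finset ℕ} (h : IsNOP m k γ) {t : ℕ}
    (ht : t ∈ Finset.Icc 1 k) : γ t ⊆ Finset.Icc 1 m := by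
  rw [← h.2.2.1]
  exact Finset.subset_biUnion_of_mem γ ht

lemma NOP_eq_of_mem {m k : ℕ} {γ : ℕ → Finset ℕ} (h : IsNOP m k γ) {i j a : ℕ}
    (hi : i ∈ Finset.Icc 1 k) (hj : j ∈ Finset.Icc 1 k)
    (hai : a ∈ γ i) (haj : a ∈ γ j) : i = j := by
  by_contra hne
  exact (Finset.disjoint_left.mp (h.2.1 i hi j hj hne) hai) haj

lemma NOP_sum_card {m k : ℕ} {γ : ℕ → Finset ℕ} (h : IsNOP m k γ) :
    ∑ t ∈ Finset.Icc 1 k, (γ t).card = m := by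
  have hd := Finset.card_biUnion (fun i hi j hj hij => h.2.1 i hi j hj hij)
  rw [h.2.2.1, Nat.card_Icc] at hd
  omega

lemma NOP_fat {m k : ℕ} {γ : ℕ → Finset ℕ} (h : IsNOP m k γ) (hk : k < m) :
    ∃ t0 ∈ Finset.Icc 1 k, ∃ x ∈ γ t0, ∃ y ∈ γ t0, x < y := by
  by_contra hcon
  push_neg at hcon
  have hall : ∀ t ∈ Finset.Icc 1 k, (γ t).card ≤ 1 := by
    intro t ht
    by_contra hgt
    push_neg at hgt
    obtain ⟨a, ha, b, hb, hab⟩ := Finset.one_lt_card.mp hgt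
    have h1 := hcon t ht a ha b hb
    have h2 := hcon t ht b hb a ha
    omega
  have hsum := NOP_sum_card h
  have hle : ∑ t ∈ Finset.Icc 1 k, (γ t).card ≤ ∑ t ∈ Finset.Icc 1 k, 1 :=
    Finset.sum_le_sum hall
  rw [Finset.sum_const, Nat.card_Icc, smul_eq_mul, mul_one] at hle
  omega

lemma NOP_singletons {n : ℕ} {γ : ℕ → Finset ℕ} (h : IsNOP n n γ) :
    ∀ t ∈ Finset.Icc 1 n, γ t = {t} := by
  have hne := h.1
  have hmin := h.2.2.2
  have hsum := NOP_sum_card h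
  have hcard1 : ∀ t ∈ Finset.Icc 1 n, (γ t).card = 1 := by
    intro t ht
    by_contra hne1
    have h1 : ∀ u ∈ Finset.Icc 1 n, 1 ≤ (γ u).card :=
      fun u hu => Finset.card_pos.mpr (hne u hu)
    have hlt : ∑ u ∈ Finset.Icc 1 n, 1 < ∑ u ∈ Finset.Icc 1 n, (γ u).card :=
      Finset.sum_lt_sum h1 ⟨t, ht, by have := h1 t ht; omega⟩
    rw [Finset.sum_const, Nat.card_Icc, smul_eq_mul, mul_one] at hlt
    omega
  have hex : ∀ t, ∃ a, t ∈ Finset.Icc 1 n → γ t = {a} := by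
    intro t
    by_cases ht : t ∈ Finset.Icc 1 n
    · obtain ⟨a, ha⟩ := Finset.card_eq_one.mp (hcard1 t ht)
      exact ⟨a, fun _ => ha⟩
    · exact ⟨0, fun hmem => absurd hmem ht⟩
  choose c hc using hex
  have hmono : ∀ t ∈ Finset.Icc 1 n, ∀ u ∈ Finset.Icc 1 n, t < u → c t < c u := by
    intro t ht u hu htu
    have hm := hmin t ht u hu htu
    rw [hc t ht, hc u hu] at hm
    simpa using hm
  have hmem : ∀ t ∈ Finset.Icc 1 n, c t ∈ Finset.Icc 1 n := by
    intro t ht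
    have hct : c t ∈ γ t := by rw [hc t ht]; exact Finset.mem_singleton_self _
    exact (NOP_block_subset h ht) hct
  have hct : ∀ t ∈ Finset.Icc 1 n, c t = t := by
    intro t ht
    rw [Finset.mem_Icc] at ht
    have hinjlow : Set.InjOn c ↑(Finset.Icc 1 t) := by
      intro a ha b hb hab
      simp only [Finset.coe_Icc, Set.mem_Icc] at ha hb
      by_contra hne'
      rcases Nat.lt_or_ge a b with h' | h'
      · have := hmono a (Finset.mem_Icc.mpr ⟨ha.1, by omega⟩) b
          (Finset.mem_Icc.mpr ⟨hb.1, by omega⟩) h'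
        omega
      · have h'' : b < a := by omega
        have := hmono b (Finset.mem_Icc.mpr ⟨hb.1, by omega⟩) a
          (Finset.mem_Icc.mpr ⟨ha.1, by omega⟩) h''
        omega
    have hlow : t ≤ c t := by
      have himg : (Finset.Icc 1 t).image c ⊆ Finset.Icc 1 (c t) := by
        intro v hv
        rw [Finset.mem_image] at hv
        obtain ⟨u, hu, rfl⟩ := hv
        rw [Finset.mem_Icc] at hu ⊢
        have h1 := hmem u (Finset.mem_Icc.mpr ⟨hu.1, by omega⟩)
        rw [Finset.mem_Icc] at h1
        rcases Nat.lt_or_ge u t with h' | h'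
        · have := hmono u (Finset.mem_Icc.mpr ⟨hu.1, by omega⟩)
            t (Finset.mem_Icc.mpr ⟨by omega, ht.2⟩) h'
          omega
        · have : u = t := by omega
          subst this
          omega
      have hcle := Finset.card_le_card himg
      rw [Finset.card_image_of_injOn hinjlow, Nat.card_Icc, Nat.card_Icc] at hcle
      omega
    have hhigh : c t ≤ t := by
      have hinjhigh : Set.InjOn c ↑(Finset.Icc t n) := by
        intro a ha b hb hab
        simp only [Finset.coe_Icc, Set.mem_Icc] at ha hb
        by_contra hne'
        rcases Nat.lt_or_ge a b with h' | h'
        · have := hmono a (Finset.mem_Icc.mpr ⟨by omega, ha.2⟩) b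
            (Finset.mem_Icc.mpr ⟨by omega, hb.2⟩) h'
          omega
        · have h'' : b < a := by omega
          have := hmono b (Finset.mem_Icc.mpr ⟨by omega, hb.2⟩) a
            (Finset.mem_Icc.mpr ⟨by omega, ha.2⟩) h''
          omega
      have himg : (Finset.Icc t n).image c ⊆ Finset.Icc (c t) n := by
        intro v hv
        rw [Finset.mem_image] at hv
        obtain ⟨u, hu, rfl⟩ := hv
        rw [Finset.mem_Icc] at hu ⊢
        have h1 := hmem u (Finset.mem_Icc.mpr ⟨by omega, hu.2⟩)
        rw [Finset.mem_Icc] at h1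
        rcases Nat.lt_or_ge t u with h' | h'
        · have := hmono t (Finset.mem_Icc.mpr ⟨by omega, ht.2⟩) u
            (Finset.mem_Icc.mpr ⟨by omega, hu.2⟩) h'
          omega
        · have : u = t := by omega
          subst this
          omega
      have hcle := Finset.card_le_card himg
      rw [Finset.card_image_of_injOn hinjhigh, Nat.card_Icc, Nat.card_Icc] at hcle
      have h1 := hmem t (Finset.mem_Icc.mpr ht)
      rw [Finset.mem_Icc] at h1
      omega
    omega
  intro t ht
  rw [hc t ht, hct t ht]

lemma indSet_id {n : ℕ} {γ : ℕ → Finset ℕ} (h : IsNOP n n γ) {P : Finset ℕ}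
    (hP : P ⊆ Finset.Icc 1 n) : indSet γ n P = P := by
  unfold indSet
  ext t
  simp only [Finset.mem_filter]
  constructor
  · rintro ⟨ht, a, ha⟩
    rw [Finset.mem_inter, NOP_singletons h t ht] at ha
    have : a = t := by simpa using ha.1
    exact this ▸ ha.2
  · intro htP
    have ht := hP htP
    refine ⟨ht, ⟨t, ?_⟩⟩
    rw [Finset.mem_inter, NOP_singletons h t ht]
    exact ⟨Finset.mem_singleton_self t, htP⟩
section Reduce

variable {m k t0 x y : ℕ} {γ : ℕ → Finset ℕ}

lemma reduce_indSet (h : IsNOP m k γ) (ht0 : t0 ∈ Finset.Icc 1 k)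
    (hxm : x ∈ γ t0) (hym' : y ∈ γ t0) (hxy : x < y) (P : Finset ℕ) :
    indSet γ k P = indSet (fun t => (γ t).image (gmap x y)) k (P.image (gmap x y)) := by
  ext t
  simp only [indSet, Finset.mem_filter]
  constructor
  · rintro ⟨ht, z, hz⟩
    rw [Finset.mem_inter] at hz
    refine ⟨ht, gmap x y z, ?_⟩
    rw [Finset.mem_inter]
    exact ⟨Finset.mem_image_of_mem _ hz.1, Finset.mem_image_of_mem _ hz.2⟩
  · rintro ⟨ht, c, hc⟩
    rw [Finset.mem_inter, Finset.mem_image] at hc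
    obtain ⟨⟨z, hzt, hz⟩, hcP⟩ := hc
    rw [Finset.mem_image] at hcP
    obtain ⟨w, hwP, hw⟩ := hcP
    refine ⟨ht, ?_⟩
    rcases (gmap_eq_iff x y z w hxy).mp (hz.trans hw.symm) with rfl | ⟨hzx, hwy⟩ | ⟨hzy, hwx⟩
    · exact ⟨z, Finset.mem_inter.mpr ⟨hzt, hwP⟩⟩
    · rw [hzx] at hzt
      rw [hwy] at hwP
      have ht0' : t = t0 := NOP_eq_of_mem h ht ht0 hzt hxm
      subst ht0'
      exact ⟨y, Finset.mem_inter.mpr ⟨hym', hwP⟩⟩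
    · rw [hzy] at hzt
      rw [hwx] at hwP
      have ht0' : t = t0 := NOP_eq_of_mem h ht ht0 hzt hym'
      subst ht0'
      exact ⟨x, Finset.mem_inter.mpr ⟨hxm, hwP⟩⟩

lemma reduce_NOP (h : IsNOP m k γ) (ht0 : t0 ∈ Finset.Icc 1 k)
    (hxm : x ∈ γ t0) (hym' : y ∈ γ t0) (hxy : x < y) :
    IsNOP (m - 1) k (fun t => (γ t).image (gmap x y)) := by
  have hsub := NOP_block_subset h ht0
  have hx1 : 1 ≤ x := by have := hsub hxm; rw [Finset.mem_Icc] at this; exact this.1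
  have hyM : y ≤ m := by have := hsub hym'; rw [Finset.mem_Icc] at this; exact this.2
  refine ⟨?_, ?_, ?_, ?_⟩
  · intro i hi
    exact (h.1 i hi).image _
  · intro i hi j hj hij
    rw [Finset.disjoint_left]
    intro c hci hcj
    rw [Finset.mem_image] at hci hcj
    obtain ⟨z, hzi, hz⟩ := hci
    obtain ⟨w, hwj, hw⟩ := hcj
    rcases (gmap_eq_iff x y z w hxy).mp (hz.trans hw.symm) with rfl | ⟨hzx, hwy⟩ | ⟨hzy, hwx⟩
    · exact hij (NOP_eq_of_mem h hi hj hzi hwj)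
    · rw [hzx] at hzi
      rw [hwy] at hwj
      have h1 : i = t0 := NOP_eq_of_mem h hi ht0 hzi hxm
      have h2 : j = t0 := NOP_eq_of_mem h hj ht0 hwj hym'
      exact hij (h1.trans h2.symm)
    · rw [hzy] at hzi
      rw [hwx] at hwj
      have h1 : i = t0 := NOP_eq_of_mem h hi ht0 hzi hym'
      have h2 : j = t0 := NOP_eq_of_mem h hj ht0 hwj hxm
      exact hij (h1.trans h2.symm)
  · rw [← Finset.biUnion_image, h.2.2.1]
    have := image_gmap_vec (m := m) hx1 hxy hyM
    unfold vec at this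
    exact this
  · intro i hi j hj hij
    have hnei : (γ i).Nonempty := h.1 i hi
    have hnej : (γ j).Nonempty := h.1 j hj
    have hneβi : ((γ i).image (gmap x y)).Nonempty := hnei.image _
    have hneβj : ((γ j).image (gmap x y)).Nonempty := hnej.image _
    have hab : (γ i).min' hnei < (γ j).min' hnej := by
      have hm := h.2.2.2 i hi j hj hij
      rw [← Finset.coe_min' hnei, ← Finset.coe_min' hnej] at hm
      exact_mod_cast hm
    set a := (γ i).min' hnei with ha
    set b := (γ j).min' hnej with hb
    -- obtain w realizing the min of the image of γ j
    have hminmem := Finset.min'_mem _ hneβj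
    rw [Finset.mem_image] at hminmem
    obtain ⟨w, hwj, hw⟩ := hminmem
    have hbw : b ≤ w := Finset.min'_le _ w hwj
    have hkey : gmap x y a < gmap x y w := by
      by_cases hwy : w = y
      · subst hwy
        have hj0 : j = t0 := NOP_eq_of_mem h hj ht0 hwj hym'
        have hbx : b ≤ x := Finset.min'_le _ x (hj0 ▸ hxm)
        unfold gmap; split_ifs <;> omega
      · unfold gmap; split_ifs <;> omega
    have hle : ((γ i).image (gmap x y)).min' hneβi ≤ gmap x y a :=
      Finset.min'_le _ _ (Finset.mem_image_of_mem _ (Finset.min'_mem _ hnei))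
    have hfin : ((γ i).image (gmap x y)).min' hneβi < ((γ j).image (gmap x y)).min' hneβj := by
      omega
    rw [← Finset.coe_min' hneβi, ← Finset.coe_min' hneβj]
    exact_mod_cast hfin

end Reduce

lemma DPat_subset {m r s : ℕ} : ∀ P ∈ DPat m r s, P ⊆ vec m := by
  intro P hP
  simp only [DPat, Set.mem_union, Set.mem_iUnion, Set.mem_singleton_iff,
    A1Pat, HPat, Set.mem_setOf_eq] at hP
  rcases hP with (⟨h1, h2, h3⟩ | ⟨h, hh, D, hD1, hD2, rfl⟩) | rfl
  · exact h2
  · exact Finset.sdiff_subset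
  · exact subset_rfl
lemma main_induced : ∀ m r s k : ℕ, ∀ γ : ℕ → Finset ℕ,
    (r = 0 ∨ (1 ≤ r ∧ r + 2 ≤ s ∧ s < m)) → 2 ≤ k → k ≤ m → IsNOP m k γ →
    indPat γ k (DPat m r s) = DPat k (r - (m - k)) (s - (m - k)) := by
  intro m
  induction m using Nat.strong_induction_on with
  | _ m IH =>
    intro r s k γ hinv hk2 hkm hNOP
    rcases eq_or_lt_of_le hkm with rfl | hlt
    · -- k = m
      rw [Nat.sub_self, Nat.sub_zero, Nat.sub_zero]
      unfold indPat
      ext Q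
      simp only [Set.mem_image]
      constructor
      · rintro ⟨P, hP, rfl⟩
        rw [indSet_id hNOP (DPat_subset P hP)]
        exact hP
      · intro hQ
        exact ⟨Q, hQ, indSet_id hNOP (DPat_subset Q hQ)⟩
    · -- k < m
      obtain ⟨t0, ht0, x, hxm, y, hym', hxy⟩ := NOP_fat hNOP hlt
      have hsub := NOP_block_subset hNOP ht0
      have hx1 : 1 ≤ x := by have := hsub hxm; rw [Finset.mem_Icc] at this; exact this.1
      have hyM : y ≤ m := by have := hsub hym'; rw [Finset.mem_Icc] at this; exact this.2
      have hβNOP : IsNOP (m - 1) k (fun t => (γ t).image (gmap x y)) :=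
        reduce_NOP hNOP ht0 hxm hym' hxy
      have hind : indPat γ k (DPat m r s)
          = indPat (fun t => (γ t).image (gmap x y)) k
              ((fun P : Finset ℕ => P.image (gmap x y)) '' DPat m r s) := by
        unfold indPat
        rw [← Set.image_comp]
        apply Set.image_congr
        intro P _
        exact reduce_indSet hNOP ht0 hxm hym' hxy P
      rw [hind]
      have hstep : (fun P : Finset ℕ => P.image (gmap x y)) '' DPat m r s
          = DPat (m - 1) (r - 1) (s - 1) := by
        rcases hinv with rfl | ⟨hr1, hrs, hsm⟩
        · exact step0 (by omega) hx1 hxy hyM s (s - 1)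
        · exact step hr1 hrs hsm hx1 hxy hyM
      rw [hstep]
      have hinv' : (r - 1 = 0 ∨ (1 ≤ r - 1 ∧ (r - 1) + 2 ≤ s - 1 ∧ s - 1 < m - 1)) := by
        rcases hinv with rfl | ⟨hr1, hrs, hsm⟩
        · left; rfl
        · rcases Nat.lt_or_ge r 2 with h' | h'
          · left; omega
          · right; omega
      have hIH := IH (m - 1) (by omega) (r - 1) (s - 1) k
        (fun t => (γ t).image (gmap x y)) hinv' hk2 (by omega) hβNOP
      rw [hIH]
      have e1 : r - 1 - (m - 1 - k) = r - (m - k) := by omega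
      have e2 : s - 1 - (m - 1 - k) = s - (m - k) := by omega
      rw [e1, e2]

theorem stmt7 (m r s : ℕ) (hr : 2 ≤ r) (hrs : r + 1 < s) (hsm : s < m) :
    IsStable m m (DPat m r s) ∧
    ∀ γ : ℕ → Finset ℕ, IsNOP m (m - 1) γ →
      indPat γ (m - 1) (DPat m r s) = DPat (m - 1) (r - 1) (s - 1) := by
  have hinv : (r = 0 ∨ (1 ≤ r ∧ r + 2 ≤ s ∧ s < m)) := Or.inr ⟨by omega, by omega, hsm⟩
  constructor
  · intro k' h2 hk α β hα hβ
    rw [main_induced m r s k' α hinv h2 hk hα, main_induced m r s k' β hinv h2 hk hβ]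
  · intro γ hγ
    have h2 : 2 ≤ m - 1 := by omega
    rw [main_induced m r s (m - 1) γ hinv h2 (by omega) hγ]
    have e1 : r - (m - (m - 1)) = r - 1 := by omega
    have e2 : s - (m - (m - 1)) = s - 1 := by omega
    rw [e1, e2]
end

section
/- Let m ≥ 3 and γ ∈ Π(m,m-1). Then: (a) (A¹_{m-2,m} ∪ 𝒩 ∪ {m⃗})_γ = A¹_{m-1,m-1} for every 𝒩 ⊆ H^m_{1,2}; (b) (A_{m-2,m} ∪ 𝒩 ∪ {m⃗})_γ = A_{m-1,m-1} for every 𝒩 ⊆ H^m_{1,1}; (c) (A_{m-2,m} ∪ 𝒩)_γ = A_{m-1,m-1} for every 𝒩 ⊆ H^m_{1,1} with |𝒩| = m-1. -/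
open Finset

section Aux

variable {m : ℕ} {γ : ℕ → Finset ℕ}

lemma blocks_subset (hγ : IsNOP m (m-1) γ) {j : ℕ} (hj : j ∈ Finset.Icc 1 (m-1)) :
    γ j ⊆ Finset.Icc 1 m := by
  intro x hx
  rw [← hγ.2.2.1]
  exact Finset.mem_biUnion.mpr ⟨j, hj, hx⟩

lemma one_mem_block_one (hm : 3 ≤ m) (hγ : IsNOP m (m-1) γ) : 1 ∈ γ 1 := by
  have h1m : (1:ℕ) ∈ Finset.Icc 1 m := by simp; omega
  rw [← hγ.2.2.1] at h1m
  obtain ⟨j, hj, hj1⟩ := Finset.mem_biUnion.mp h1m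
  rcases eq_or_ne j 1 with rfl | hne
  · exact hj1
  · exfalso
    have hjIcc := Finset.mem_Icc.mp hj
    have h1k : (1:ℕ) ∈ Finset.Icc 1 (m-1) := by simp; omega
    have hlt := hγ.2.2.2 1 h1k j hj (by omega)
    have hmin_j : (γ j).min ≤ (1:ℕ) := Finset.min_le hj1
    have hmin_1 : (1 : WithTop ℕ) ≤ (γ 1).min := by
      apply Finset.le_min
      intro a ha
      have := Finset.mem_Icc.mp (blocks_subset hγ h1k ha)
      exact WithTop.coe_le_coe.mpr this.1
    exact absurd (lt_of_le_of_lt hmin_1 (lt_of_lt_of_le hlt hmin_j)) (lt_irrefl _)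

lemma indSet_subset (P : Finset ℕ) : indSet γ (m-1) P ⊆ Finset.Icc 1 (m-1) :=
  Finset.filter_subset _ _

lemma one_mem_indSet (hm : 3 ≤ m) (hγ : IsNOP m (m-1) γ) {P : Finset ℕ} (hP : 1 ∈ P) :
    1 ∈ indSet γ (m-1) P := by
  refine Finset.mem_filter.mpr ⟨by simp; omega, ⟨1, Finset.mem_inter.mpr ⟨one_mem_block_one hm hγ, hP⟩⟩⟩

lemma indSet_nonempty (hγ : IsNOP m (m-1) γ) {P : Finset ℕ} (hne : P.Nonempty)
    (hsub : P ⊆ vec m) : (indSet γ (m-1) P).Nonempty := by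
  obtain ⟨x, hx⟩ := hne
  have hxm : x ∈ Finset.Icc 1 m := hsub hx
  rw [← hγ.2.2.1] at hxm
  obtain ⟨j, hj, hjx⟩ := Finset.mem_biUnion.mp hxm
  exact ⟨j, Finset.mem_filter.mpr ⟨hj, ⟨x, Finset.mem_inter.mpr ⟨hjx, hx⟩⟩⟩⟩

lemma indSet_vec (hγ : IsNOP m (m-1) γ) : indSet γ (m-1) (vec m) = Finset.Icc 1 (m-1) := by
  unfold indSet
  apply Finset.filter_true_of_mem
  intro j hj
  obtain ⟨x, hx⟩ := hγ.1 j hj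
  exact ⟨x, Finset.mem_inter.mpr ⟨hx, blocks_subset hγ hj hx⟩⟩

lemma exists_preimage (hm : 3 ≤ m) (hγ : IsNOP m (m-1) γ) {S : Finset ℕ}
    (hS : S ⊆ Finset.Icc 1 (m-1)) (hSne : S.Nonempty) :
    ∃ P : Finset ℕ, P ⊆ vec m ∧ P.Nonempty ∧ P.card ≤ S.card ∧
      (1 ∈ S → 1 ∈ P) ∧ indSet γ (m-1) P = S := by
  classical
  set f : ℕ → ℕ := fun j => if h : (γ j).Nonempty then (γ j).min' h else 0 with hf
  have hfmem : ∀ j ∈ Finset.Icc 1 (m-1), f j ∈ γ j := by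
    intro j hj
    have h := hγ.1 j hj
    simp only [hf, dif_pos h]
    exact Finset.min'_mem _ h
  refine ⟨S.image f, ?_, hSne.image f, Finset.card_image_le, ?_, ?_⟩
  · intro x hx
    obtain ⟨j, hj, rfl⟩ := Finset.mem_image.mp hx
    exact blocks_subset hγ (hS hj) (hfmem j (hS hj))
  · intro h1S
    have h1k : (1:ℕ) ∈ Finset.Icc 1 (m-1) := by simp; omega
    have hne1 : (γ 1).Nonempty := hγ.1 1 h1k
    have hf1 : f 1 = 1 := by
      simp only [hf, dif_pos hne1]
      apply le_antisymm
      · exact Finset.min'_le _ _ (one_mem_block_one hm hγ)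
      · apply Finset.le_min'
        intro y hy
        exact (Finset.mem_Icc.mp (blocks_subset hγ h1k hy)).1
    exact Finset.mem_image.mpr ⟨1, h1S, hf1⟩
  · ext j
    simp only [indSet, Finset.mem_filter]
    constructor
    · rintro ⟨hjIcc, x, hx⟩
      rw [Finset.mem_inter] at hx
      obtain ⟨j', hj'S, rfl⟩ := Finset.mem_image.mp hx.2
      rcases eq_or_ne j j' with rfl | hne
      · exact hj'S
      · exact absurd (Finset.disjoint_left.mp
          (hγ.2.1 j hjIcc j' (hS hj'S) hne) hx.1 (hfmem j' (hS hj'S))) (fun h => h)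
    · intro hjS
      exact ⟨hS hjS, ⟨f j, Finset.mem_inter.mpr ⟨hfmem j (hS hjS),
        Finset.mem_image.mpr ⟨j, hjS, rfl⟩⟩⟩⟩

lemma exists_fat_block (hm : 3 ≤ m) (hγ : IsNOP m (m-1) γ) :
    ∃ j ∈ Finset.Icc 1 (m-1), ∃ a ∈ γ j, ∃ b ∈ γ j, a ≠ b := by
  by_contra h
  push_neg at h
  have hcard : ∀ j ∈ Finset.Icc 1 (m-1), (γ j).card ≤ 1 := by
    intro j hj
    by_contra hc
    obtain ⟨a, ha, b, hb, hne⟩ := (Finset.one_lt_card (s := γ j)).mp (by omega)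
    exact hne (h j hj a ha b hb)
  have hsum : ∑ j ∈ Finset.Icc 1 (m-1), (γ j).card ≤ (Finset.Icc 1 (m-1)).card • 1 :=
    Finset.sum_le_card_nsmul _ _ _ hcard
  have hle := Finset.card_biUnion_le (s := Finset.Icc 1 (m-1)) (t := γ)
  rw [hγ.2.2.1] at hle
  simp only [Nat.card_Icc, smul_eq_mul, mul_one] at hsum hle
  omega

lemma indSet_compl_mem_fat (hm : 3 ≤ m) (hγ : IsNOP m (m-1) γ) {j a b d : ℕ}
    (hj : j ∈ Finset.Icc 1 (m-1)) (ha : a ∈ γ j) (hb : b ∈ γ j) (hab : a ≠ b)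
    (hd : d = a ∨ d = b) :
    indSet γ (m-1) (vec m \ {d}) = Finset.Icc 1 (m-1) := by
  unfold indSet
  apply Finset.filter_true_of_mem
  intro j' hj'
  rcases eq_or_ne j' j with rfl | hne
  · refine ⟨if d = a then b else a, Finset.mem_inter.mpr ⟨?_, ?_⟩⟩
    · split <;> assumption
    · rw [Finset.mem_sdiff]
      constructor
      · split
        · exact blocks_subset hγ hj' hb
        · exact blocks_subset hγ hj' ha
      · simp only [Finset.mem_singleton]
        split <;> rename_i h
        · subst h; exact fun hh => hab hh.symm
        · intro hh; rcases hd with rfl | rfl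
          · exact h rfl
          · exact hab (hh.symm ▸ rfl)
  · obtain ⟨x, hx⟩ := hγ.1 j' hj'
    refine ⟨x, Finset.mem_inter.mpr ⟨hx, Finset.mem_sdiff.mpr ⟨blocks_subset hγ hj' hx, ?_⟩⟩⟩
    simp only [Finset.mem_singleton]
    rintro rfl
    have hdj : x ∈ γ j := by rcases hd with rfl | rfl <;> assumption
    exact Finset.disjoint_left.mp (hγ.2.1 j' hj' j hj hne) hx hdj

end Aux

theorem stmt8 (m : ℕ) (hm : 3 ≤ m) (γ : ℕ → Finset ℕ) (hγ : IsNOP m (m - 1) γ) :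
    (∀ N : Set (Finset ℕ), N ⊆ HPat m 1 2 →
      indPat γ (m - 1) (A1Pat (m - 2) m ∪ N ∪ {vec m}) = A1Pat (m - 1) (m - 1)) ∧
    (∀ N : Set (Finset ℕ), N ⊆ HPat m 1 1 →
      indPat γ (m - 1) (APat (m - 2) m ∪ N ∪ {vec m}) = APat (m - 1) (m - 1)) ∧
    (∀ N : Set (Finset ℕ), N ⊆ HPat m 1 1 → N.ncard = m - 1 →
      indPat γ (m - 1) (APat (m - 2) m ∪ N) = APat (m - 1) (m - 1)) := by
  have hveq : vec (m-1) = Finset.Icc 1 (m-1) := rfl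
  have hcardIcc : (Finset.Icc 1 (m-1)).card = m - 1 := by simp
  -- generic cardinality bound from subset
  have hcardle : ∀ P : Finset ℕ, (indSet γ (m-1) P).card ≤ m - 1 := by
    intro P
    calc (indSet γ (m-1) P).card ≤ (Finset.Icc 1 (m-1)).card :=
          Finset.card_le_card (indSet_subset P)
      _ = m - 1 := hcardIcc
  refine ⟨?_, ?_, ?_⟩
  · -- part (a)
    intro N hN
    apply Set.Subset.antisymm
    · rintro _ ⟨P, hP, rfl⟩
      rcases hP with (hP | hP) | hP
      · obtain ⟨h1, hsub, hcard⟩ := hP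
        exact ⟨one_mem_indSet hm hγ h1, indSet_subset P, hcardle P⟩
      · obtain ⟨D, hD1, hDsub, rfl⟩ := hN hP
        obtain ⟨d, rfl⟩ := Finset.card_eq_one.mp hD1
        have hd2 : 2 ≤ d := (Finset.mem_Icc.mp (hDsub (Finset.mem_singleton_self d))).1
        have h1P : 1 ∈ vec m \ {d} := by
          rw [Finset.mem_sdiff]
          exact ⟨by simp [vec]; omega, by simp; omega⟩
        exact ⟨one_mem_indSet hm hγ h1P, indSet_subset _, hcardle _⟩
      · rcases hP with rfl
        rw [indSet_vec hγ]
        exact ⟨by simp; omega, by rw [hveq], by rw [hcardIcc]⟩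
    · rintro S ⟨h1S, hsub, hcard⟩
      rw [hveq] at hsub
      by_cases hc : S.card ≤ m - 2
      · obtain ⟨P, hPsub, hPne, hPcard, hP1, hPind⟩ :=
          exists_preimage hm hγ hsub ⟨1, h1S⟩
        exact ⟨P, Or.inl (Or.inl ⟨hP1 h1S, hPsub, le_trans hPcard hc⟩), hPind⟩
      · have hSeq : S = Finset.Icc 1 (m-1) :=
          Finset.eq_of_subset_of_card_le hsub (by omega)
        exact ⟨vec m, Or.inr rfl, by rw [indSet_vec hγ, hSeq]⟩
  · -- part (b)
    intro N hN
    apply Set.Subset.antisymm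
    · rintro _ ⟨P, hP, rfl⟩
      rcases hP with (hP | hP) | hP
      · obtain ⟨hne, hsub, hcard⟩ := hP
        exact ⟨indSet_nonempty hγ hne hsub, indSet_subset P, hcardle P⟩
      · obtain ⟨D, hD1, hDsub, rfl⟩ := hN hP
        obtain ⟨d, rfl⟩ := Finset.card_eq_one.mp hD1
        have hPne : (vec m \ {d}).Nonempty := by
          refine ⟨if d = 1 then 2 else 1, Finset.mem_sdiff.mpr ⟨?_, ?_⟩⟩
          · split <;> · simp [vec]; omega
          · split <;> · simp; omega
        exact ⟨indSet_nonempty hγ hPne Finset.sdiff_subset, indSet_subset _, hcardle _⟩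
      · rcases hP with rfl
        rw [indSet_vec hγ]
        exact ⟨⟨1, by simp; omega⟩, by rw [hveq], by rw [hcardIcc]⟩
    · rintro S ⟨hSne, hsub, hcard⟩
      rw [hveq] at hsub
      by_cases hc : S.card ≤ m - 2
      · obtain ⟨P, hPsub, hPne, hPcard, hP1, hPind⟩ :=
          exists_preimage hm hγ hsub hSne
        exact ⟨P, Or.inl (Or.inl ⟨hPne, hPsub, le_trans hPcard hc⟩), hPind⟩
      · have hSeq : S = Finset.Icc 1 (m-1) :=
          Finset.eq_of_subset_of_card_le hsub (by omega)
        exact ⟨vec m, Or.inr rfl, by rw [indSet_vec hγ, hSeq]⟩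
  · -- part (c)
    intro N hN hNcard
    classical
    -- the set of hole positions of N
    set T : Finset ℕ := (Finset.Icc 1 m).filter (fun d => (vec m \ {d}) ∈ N) with hT
    have hNT : N = (fun d => vec m \ {d}) '' (T : Set ℕ) := by
      ext P
      constructor
      · intro hP
        obtain ⟨D, hD1, hDsub, rfl⟩ := hN hP
        obtain ⟨d, rfl⟩ := Finset.card_eq_one.mp hD1
        exact ⟨d, by
          simp only [Finset.coe_filter, Set.mem_setOf_eq, hT]
          exact ⟨hDsub (Finset.mem_singleton_self d), hP⟩, rfl⟩
      · rintro ⟨d, hd, rfl⟩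
        simp only [hT, Finset.coe_filter, Set.mem_setOf_eq] at hd
        exact hd.2
    have hinj : Set.InjOn (fun d => vec m \ {d}) (T : Set ℕ) := by
      intro d hd d' hd' heq
      replace heq : vec m \ {d} = vec m \ {d'} := heq
      simp only [hT, Finset.coe_filter, Set.mem_setOf_eq, Finset.mem_Icc] at hd hd'
      by_contra hne
      have : d ∈ vec m \ {d'} := Finset.mem_sdiff.mpr
        ⟨Finset.mem_Icc.mpr hd.1, by simp [hne]⟩
      rw [← heq] at this
      exact (Finset.mem_sdiff.mp this).2 (Finset.mem_singleton_self d)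
    have hTcard : T.card = m - 1 := by
      rw [hNT] at hNcard
      rw [Set.ncard_image_of_injOn hinj, Set.ncard_coe_finset] at hNcard
      exact hNcard
    obtain ⟨j, hj, a, ha, b, hb, hab⟩ := exists_fat_block hm hγ
    have haIcc : a ∈ Finset.Icc 1 m := blocks_subset hγ hj ha
    have hbIcc : b ∈ Finset.Icc 1 m := blocks_subset hγ hj hb
    have hdT : ∃ d ∈ T, d = a ∨ d = b := by
      by_contra hcon
      push_neg at hcon
      have hTsub : T ⊆ (Finset.Icc 1 m) \ {a, b} := by
        intro d hd
        refine Finset.mem_sdiff.mpr ⟨Finset.mem_of_mem_filter d hd, ?_⟩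
        simp only [Finset.mem_insert, Finset.mem_singleton]
        rintro (rfl | rfl)
        · exact (hcon d hd).1 rfl
        · exact (hcon d hd).2 rfl
      have hle := Finset.card_le_card hTsub
      have hsd : ((Finset.Icc 1 m) \ ({a, b} : Finset ℕ)).card = m - 2 := by
        rw [Finset.card_sdiff_of_subset (by
          intro x hx
          simp only [Finset.mem_insert, Finset.mem_singleton] at hx
          rcases hx with rfl | rfl <;> assumption)]
        rw [Finset.card_pair hab]
        simp
      omega
    obtain ⟨d, hdT', hdab⟩ := hdT
    have hdN : (vec m \ {d}) ∈ N := (Finset.mem_filter.mp hdT').2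
    apply Set.Subset.antisymm
    · rintro _ ⟨P, hP, rfl⟩
      rcases hP with hP | hP
      · obtain ⟨hne, hsub, hcard⟩ := hP
        exact ⟨indSet_nonempty hγ hne hsub, indSet_subset P, hcardle P⟩
      · obtain ⟨D, hD1, hDsub, rfl⟩ := hN hP
        obtain ⟨e, rfl⟩ := Finset.card_eq_one.mp hD1
        have hPne : (vec m \ {e}).Nonempty := by
          refine ⟨if e = 1 then 2 else 1, Finset.mem_sdiff.mpr ⟨?_, ?_⟩⟩
          · split <;> · simp [vec]; omega
          · split <;> · simp; omega
        exact ⟨indSet_nonempty hγ hPne Finset.sdiff_subset, indSet_subset _, hcardle _⟩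
    · rintro S ⟨hSne, hsub, hcard⟩
      rw [hveq] at hsub
      by_cases hc : S.card ≤ m - 2
      · obtain ⟨P, hPsub, hPne, hPcard, hP1, hPind⟩ :=
          exists_preimage hm hγ hsub hSne
        exact ⟨P, Or.inl ⟨hPne, hPsub, le_trans hPcard hc⟩, hPind⟩
      · have hSeq : S = Finset.Icc 1 (m-1) :=
          Finset.eq_of_subset_of_card_le hsub (by omega)
        exact ⟨vec m \ {d}, Or.inr hdN, by
          rw [indSet_compl_mem_fat hm hγ hj ha hb hab hdab, hSeq]⟩
end

section
/- For all integers r,s,m with 2 ≤ r < r+1 < s < m, the pattern D^m_{r,s} equals the union of A¹_{m-r-1,m} with the collection of all sets of the form {1,…,l} ∪ S, where 1 ≤ l ≤ m and S ⊆ m⃗ is a set of cardinality at most m-s. -/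
open Finset

theorem stmt12 (m r s : ℕ) (hr : 2 ≤ r) (hrs : r + 1 < s) (hsm : s < m) :
    DPat m r s = A1Pat (m - r - 1) m ∪
      { F : Finset ℕ | ∃ (l : ℕ) (S : Finset ℕ), 1 ≤ l ∧ l ≤ m ∧ S ⊆ vec m ∧
        S.card ≤ m - s ∧ F = Finset.Icc 1 l ∪ S } := by
  ext F
  simp only [DPat, Set.mem_union, Set.mem_iUnion, Set.mem_setOf_eq,
    Set.mem_singleton_iff, HPat, A1Pat, exists_prop]
  constructor
  · rintro ((hA | ⟨h, hh, D, hcard, hsub, rfl⟩) | hF)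
    · exact Or.inl hA
    · simp only [Finset.mem_Icc] at hh
      refine Or.inr ⟨s - h, (Finset.Icc (s - h + 1) m) \ D, by omega, by omega, ?_, ?_, ?_⟩
      · intro x hx
        simp only [vec, Finset.mem_sdiff, Finset.mem_Icc] at hx ⊢
        omega
      · rw [Finset.card_sdiff_of_subset hsub, Nat.card_Icc, hcard]
        omega
      · ext x
        simp only [vec, Finset.mem_sdiff, Finset.mem_union, Finset.mem_Icc]
        constructor
        · rintro ⟨⟨h1, h2⟩, hD⟩
          by_cases hx : x ≤ s - h
          · exact Or.inl ⟨h1, hx⟩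
          · exact Or.inr ⟨⟨by omega, h2⟩, hD⟩
        · rintro (⟨h1, h2⟩ | ⟨⟨h1, h2⟩, hD⟩)
          · refine ⟨⟨h1, by omega⟩, fun hx => ?_⟩
            have := hsub hx
            simp only [Finset.mem_Icc] at this
            omega
          · exact ⟨⟨by omega, h2⟩, hD⟩
    · subst hF
      exact Or.inr ⟨m, ∅, by omega, le_rfl, by simp, by simp, by simp [vec]⟩
  · rintro (hA | ⟨l, S, hl1, hlm, hS, hScard, rfl⟩)
    · exact Or.inl (Or.inl hA)
    · have hFsub : Finset.Icc 1 l ∪ S ⊆ vec m := by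
        intro x hx
        rw [Finset.mem_union] at hx
        rcases hx with hx | hx
        · rw [Finset.mem_Icc] at hx; rw [vec, Finset.mem_Icc]; omega
        · exact hS hx
      set D := vec m \ (Finset.Icc 1 l ∪ S) with hD
      have hDcard : D.card = m - (Finset.Icc 1 l ∪ S).card := by
        rw [hD, Finset.card_sdiff_of_subset hFsub, vec, Nat.card_Icc]
        omega
      have hFcard : (Finset.Icc 1 l ∪ S).card ≤ l + (m - s) := by
        calc (Finset.Icc 1 l ∪ S).card ≤ (Finset.Icc 1 l).card + S.card :=
              Finset.card_union_le _ _
          _ ≤ l + (m - s) := by rw [Nat.card_Icc]; omega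
      have hFcard' : (Finset.Icc 1 l ∪ S).card ≤ m := by
        calc (Finset.Icc 1 l ∪ S).card ≤ (vec m).card := Finset.card_le_card hFsub
          _ = m := by rw [vec, Nat.card_Icc]; omega
      by_cases hDe : D = ∅
      · have : Finset.Icc 1 l ∪ S = vec m := by
          apply Finset.Subset.antisymm hFsub
          intro x hx
          by_contra hc
          have : x ∈ D := Finset.mem_sdiff.mpr ⟨hx, hc⟩
          simp [hDe] at this
        exact Or.inr this
      · have hh1 : 1 ≤ D.card := by
          rcases Finset.nonempty_iff_ne_empty.mpr hDe with ⟨x, hx⟩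
          exact Finset.card_pos.mpr ⟨x, hx⟩
        have hFeq : Finset.Icc 1 l ∪ S = vec m \ D :=
          (Finset.sdiff_sdiff_eq_self hFsub).symm
        by_cases hhr : D.card ≤ r
        · refine Or.inl (Or.inr ?_)
          refine ⟨D.card, Finset.mem_Icc.mpr ⟨hh1, hhr⟩, D, rfl, ?_, hFeq⟩
          intro x hx
          have hxm : x ∈ vec m := (Finset.mem_sdiff.mp hx).1
          have hxF : x ∉ Finset.Icc 1 l ∪ S := (Finset.mem_sdiff.mp hx).2
          have hxI : x ∉ Finset.Icc 1 l := fun h => hxF (Finset.mem_union_left _ h)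
          simp only [vec, Finset.mem_Icc] at hxm
          simp only [Finset.mem_Icc] at hxI ⊢
          omega
        · refine Or.inl (Or.inl ?_)
          refine ⟨Finset.mem_union_left _ (Finset.mem_Icc.mpr ⟨le_refl 1, hl1⟩), hFsub, ?_⟩
          omega
end
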